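/- arXiv:0811.4761 — 3 statements merged into one kernel-verified Lean document; each statement's English description precedes it below -/
import Mathlib

section
/- Fix m ∈ ℤ \ {0}, V₀ > 0, δ ∈ (0,1), C₀ > 0 and h ∈ (0, π/8). There exists ν₀ > 0 such that for every real ν ≥ ν₀ the following holds. Let S_ν = {ρ ∈ ℂ : −(2 log ν)/ν ≤ Re ρ ≤ 0, −π ≤ Im ρ ≤ 0}, and let w, g₁, g₃ be holomorphic on an open neighborhood of S_ν with |w(ρ)²| ≤ 1 − δ, |g₁(ρ)| ≤ C₀/ν, and |g₃(ρ)| ≤ C₀/ν for all ρ ∈ S_ν. Define f(ρ) = ν² (1 − w(ρ)²) e^{2νρ} (1 + g₁(ρ)) − i m V₀/4 − g₃(ρ). Then: (i) for every k ∈ ℤ such that Im ρ_k ∈ (−π + 2h, −2h), where ρ_k = (1/(2ν)) log(|m| V₀/4) − (log ν)/ν + i(π/ν)(k + sgn(m)/4), the function f has at least one zero ρ with −(2 log ν)/ν < Re ρ < 0 and |Im ρ − Im ρ_k| < π/ν; (ii) f has at least ν(π − 4h)/π − 2 zeros, counted with multiplicity, in the open rectangle {ρ : −(2 log ν)/ν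 < Re ρ < 0, −π + 2h < Im ρ < −2h}. -/
open Complex Real Set

section StmtHelpers
open Complex Set

lemma tri1 (X c g : ℂ) : ‖X‖ - ‖c‖ - ‖g‖ ≤ ‖X - c - g‖ := by
  have h2 : ‖X‖ ≤ ‖X - c - g‖ + ‖c‖ + ‖g‖ := by
    calc ‖X‖ = ‖(X - c - g) + c + g‖ := by congr 1; ring
    _ ≤ ‖(X - c - g) + c‖ + ‖g‖ := norm_add_le _ _
    _ ≤ ‖X - c - g‖ + ‖c‖ + ‖g‖ := by
        linarith [norm_add_le (X - c - g) c]
  linarith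

lemma tri2 (X c g : ℂ) : ‖c‖ - ‖X‖ - ‖g‖ ≤ ‖X - c - g‖ := by
  have h2 : ‖c‖ ≤ ‖X - c - g‖ + ‖X‖ + ‖g‖ := by
    calc ‖c‖ = ‖(-(X - c - g)) + X + (-g)‖ := by congr 1; ring
    _ ≤ ‖(-(X - c - g)) + X‖ + ‖-g‖ := norm_add_le _ _
    _ ≤ ‖-(X - c - g)‖ + ‖X‖ + ‖-g‖ := by
        linarith [norm_add_le (-(X - c - g)) X]
    _ = ‖X - c - g‖ + ‖X‖ + ‖g‖ := by
        rw [norm_neg, norm_neg]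
  linarith

lemma exists_zero_of_lt_min_frontier {f : ℂ → ℂ} {R : Set ℂ}
    (hRb : Bornology.IsBounded R)
    (hd : DiffContOnCl ℂ f R) {z₀ : ℂ} (hz₀ : z₀ ∈ R) {M : ℝ}
    (hfront : ∀ z ∈ frontier R, M ≤ ‖f z‖)
    (hlt : ‖f z₀‖ < M) :
    ∃ z ∈ R, f z = 0 := by
  by_contra hcon
  push_neg at hcon
  have hne : ∀ z ∈ closure R, f z ≠ 0 := by
    intro z hz
    have : z ∈ R ∪ frontier R := by
      rw [← closure_eq_self_union_frontier]; exact hz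
    rcases this with h | h
    · exact hcon z h
    · intro h0
      have := hfront z h
      rw [h0] at this
      simp only [norm_zero] at this
      have : M ≤ 0 := this
      linarith [norm_nonneg (f z₀)]
  have hd' : DiffContOnCl ℂ (fun z => (f z)⁻¹) R :=
    ⟨hd.differentiableOn.inv (fun z hz => hne z (subset_closure hz)),
      hd.continuousOn.inv₀ hne⟩
  obtain ⟨z, hzf, hmax⟩ := Complex.exists_mem_frontier_isMaxOn_norm hRb ⟨z₀, hz₀⟩ hd'
  have h1 := hmax (subset_closure hz₀)
  simp only [Function.comp_apply, norm_inv] at h1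
  have hzcl : z ∈ closure R := by
    rw [closure_eq_self_union_frontier]; exact Or.inr hzf
  have hfz : 0 < ‖f z‖ := norm_pos_iff.mpr (hne z hzcl)
  have hfz₀ : 0 < ‖f z₀‖ := norm_pos_iff.mpr (hne z₀ (subset_closure hz₀))
  have h1' : (‖f z₀‖)⁻¹ ≤ (‖f z‖)⁻¹ := h1
  have : ‖f z‖ ≤ ‖f z₀‖ := by
    nlinarith [mul_inv_cancel₀ hfz.ne', mul_inv_cancel₀ hfz₀.ne', mul_pos hfz hfz₀]
  have := hfront z hzf
  linarith

set_option maxHeartbeats 1000000 in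
lemma key_rect {ν δ ε M : ℝ} {c : ℂ} {w g₁ g₃ : ℂ → ℂ} {U : Set ℂ}
    (hU : IsOpen U) (hν : 1 < ν) (hδ0 : 0 < δ) (hδ1 : δ < 1) (hε0 : 0 < ε)
    (hM0 : 0 < M) (hc : ‖c‖ = M)
    (hε2 : ε ≤ 1/2) (hεδ : 2*ε ≤ δ/2)
    (hbig : 2*M + ε ≤ ν^2 * δ / 2)
    (hgap : M*(1-δ) + 2*M*ε + ε < M - ε - 3/ν^2)
    {x₀ y : ℝ}
    (hx₀l : -(2 * Real.log ν)/ν < x₀) (hx₀r : x₀ < 0)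
    (hid : Complex.exp (2 * (ν:ℂ) * ((x₀:ℂ) + (y:ℂ) * Complex.I)) = c / (ν:ℂ)^2)
    (hsub : ∀ ρ : ℂ, -(2 * Real.log ν)/ν ≤ ρ.re → ρ.re ≤ 0 →
        y - Real.pi/(2*ν) ≤ ρ.im → ρ.im ≤ y + Real.pi/(2*ν) → ρ ∈ U)
    (hwd : DifferentiableOn ℂ w U) (hg₁d : DifferentiableOn ℂ g₁ U)
    (hg₃d : DifferentiableOn ℂ g₃ U)
    (hw : ∀ ρ : ℂ, -(2 * Real.log ν)/ν ≤ ρ.re → ρ.re ≤ 0 →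
        y - Real.pi/(2*ν) ≤ ρ.im → ρ.im ≤ y + Real.pi/(2*ν) →
        ‖(w ρ)^2‖ ≤ 1 - δ)
    (hg₁ : ∀ ρ : ℂ, -(2 * Real.log ν)/ν ≤ ρ.re → ρ.re ≤ 0 →
        y - Real.pi/(2*ν) ≤ ρ.im → ρ.im ≤ y + Real.pi/(2*ν) →
        ‖g₁ ρ‖ ≤ ε)
    (hg₃ : ∀ ρ : ℂ, -(2 * Real.log ν)/ν ≤ ρ.re → ρ.re ≤ 0 →
        y - Real.pi/(2*ν) ≤ ρ.im → ρ.im ≤ y + Real.pi/(2*ν) →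
        ‖g₃ ρ‖ ≤ ε) :
    ∃ ρ : ℂ, ((ν:ℂ)^2 * (1 - (w ρ)^2) * Complex.exp (2*(ν:ℂ)*ρ) * (1 + g₁ ρ) - c - g₃ ρ = 0)
      ∧ -(2*Real.log ν)/ν < ρ.re ∧ ρ.re < 0
      ∧ y - Real.pi/(2*ν) < ρ.im ∧ ρ.im < y + Real.pi/(2*ν) := by
  have hν0 : (0:ℝ) < ν := by linarith
  have hπ : (0:ℝ) < Real.pi := Real.pi_pos
  set a : ℝ := -(2*Real.log ν)/ν with ha_def
  set r : ℝ := Real.pi/(2*ν) with hr_def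
  have hlog : 0 < Real.log ν := Real.log_pos hν
  have ha0 : a < 0 := by
    rw [ha_def]
    apply div_neg_of_neg_of_pos _ hν0
    linarith
  have hr0 : 0 < r := by rw [hr_def]; positivity
  have hν2 : ((ν:ℂ)^2) ≠ 0 := pow_ne_zero 2 (by exact_mod_cast hν0.ne')
  set f : ℂ → ℂ := fun ρ =>
    (ν:ℂ)^2 * (1 - (w ρ)^2) * Complex.exp (2*(ν:ℂ)*ρ) * (1 + g₁ ρ) - c - g₃ ρ with hf_def
  -- differentiability
  have hfd : DifferentiableOn ℂ f U := by
    apply DifferentiableOn.sub _ hg₃d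
    apply DifferentiableOn.sub _ (differentiableOn_const c)
    apply DifferentiableOn.mul
    · apply DifferentiableOn.mul
      · exact (differentiableOn_const _).mul ((differentiableOn_const _).sub (hwd.pow 2))
      · exact (Complex.differentiable_exp.comp
          ((differentiable_const _).mul differentiable_id)).differentiableOn
    · exact (differentiableOn_const _).add hg₁d
  -- the rectangle
  set R : Set ℂ := (Ioo a 0) ×ℂ (Ioo (y - r) (y + r)) with hR_def
  have hy1 : y - r < y + r := by linarith
  have hRcl : closure R = (Icc a 0) ×ℂ (Icc (y - r) (y + r)) := by
    rw [hR_def, Complex.closure_reProdIm, closure_Ioo ha0.ne, closure_Ioo hy1.ne]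
  have hRfr : frontier R =
      (Icc a 0) ×ℂ ({y - r, y + r} : Set ℝ) ∪ ({a, 0} : Set ℝ) ×ℂ (Icc (y - r) (y + r)) := by
    rw [hR_def, Complex.frontier_reProdIm, closure_Ioo ha0.ne, closure_Ioo hy1.ne,
      frontier_Ioo ha0, frontier_Ioo hy1]
  -- pointwise estimates on the closed rectangle
  have hmemU : ∀ z : ℂ, a ≤ z.re → z.re ≤ 0 → y - r ≤ z.im → z.im ≤ y + r → z ∈ U := by
    intro z h1 h2 h3 h4; exact hsub z h1 h2 h3 h4
  have hA2 : ∀ z : ℂ, a ≤ z.re → z.re ≤ 0 → y - r ≤ z.im → z.im ≤ y + r →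
      δ ≤ (1 - (w z)^2).re := by
    intro z h1 h2 h3 h4
    have hwz := hw z h1 h2 h3 h4
    have := Complex.re_le_norm ((w z)^2)
    simp only [Complex.sub_re, Complex.one_re]
    linarith
  have hA1 : ∀ z : ℂ, a ≤ z.re → z.re ≤ 0 → y - r ≤ z.im → z.im ≤ y + r →
      ‖1 - (w z)^2‖ ≤ 2 := by
    intro z h1 h2 h3 h4
    have hwz := hw z h1 h2 h3 h4
    have h5 := norm_sub_le (1:ℂ) ((w z)^2)
    simp only [norm_one] at h5
    linarith
  have hA3 : ∀ z : ℂ, a ≤ z.re → z.re ≤ 0 → y - r ≤ z.im → z.im ≤ y + r →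
      δ ≤ ‖1 - (w z)^2‖ := by
    intro z h1 h2 h3 h4
    exact le_trans (hA2 z h1 h2 h3 h4) (Complex.re_le_norm _)
  have hG1 : ∀ z : ℂ, a ≤ z.re → z.re ≤ 0 → y - r ≤ z.im → z.im ≤ y + r →
      ‖1 + g₁ z‖ ≤ 1 + ε := by
    intro z h1 h2 h3 h4
    have := hg₁ z h1 h2 h3 h4
    calc ‖1 + g₁ z‖ ≤ ‖1‖ + ‖g₁ z‖ := norm_add_le _ _
    _ ≤ 1 + ε := by simp only [norm_one]; linarith
  have hG2 : ∀ z : ℂ, a ≤ z.re → z.re ≤ 0 → y - r ≤ z.im → z.im ≤ y + r →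
      1 - ε ≤ ‖1 + g₁ z‖ := by
    intro z h1 h2 h3 h4
    have hgz := hg₁ z h1 h2 h3 h4
    have h5 : (1:ℝ) ≤ ‖1 + g₁ z‖ + ‖g₁ z‖ := by
      have := norm_add_le (1 + g₁ z) (-(g₁ z))
      simpa using this
    linarith
  have hReAG : ∀ z : ℂ, a ≤ z.re → z.re ≤ 0 → y - r ≤ z.im → z.im ≤ y + r →
      δ/2 ≤ ((1 - (w z)^2) * (1 + g₁ z)).re := by
    intro z h1 h2 h3 h4
    have hsplit : (1 - (w z)^2) * (1 + g₁ z) = (1 - (w z)^2) + (1 - (w z)^2) * g₁ z := by ring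
    rw [hsplit, Complex.add_re]
    have h5 : -(‖(1 - (w z)^2) * g₁ z‖) ≤ ((1 - (w z)^2) * g₁ z).re :=
      (abs_le.1 (Complex.abs_re_le_norm _)).1
    have h6 : ‖(1 - (w z)^2) * g₁ z‖ ≤ 2 * ε := by
      rw [norm_mul]
      have := hA1 z h1 h2 h3 h4
      have := hg₁ z h1 h2 h3 h4
      have := norm_nonneg (g₁ z)
      nlinarith
    have := hA2 z h1 h2 h3 h4
    linarith

  -- exponential splitting
  have hsplit : ∀ z : ℂ, Complex.exp (2*(ν:ℂ)*z)
      = (Real.exp (2*ν*z.re) : ℂ) * Complex.exp (((2*ν*z.im : ℝ) : ℂ) * Complex.I) := by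
    intro z
    have harg : 2*(ν:ℂ)*z = ((2*ν*z.re : ℝ):ℂ) + ((2*ν*z.im : ℝ):ℂ)*Complex.I := by
      conv_lhs => rw [← Complex.re_add_im z]
      push_cast
      ring
    rw [harg, Complex.exp_add, Complex.ofReal_exp]
  have hz₀reim : ((x₀:ℂ) + (y:ℂ)*Complex.I).re = x₀ ∧ ((x₀:ℂ) + (y:ℂ)*Complex.I).im = y := by
    constructor <;> simp
  have hid' : (Real.exp (2*ν*x₀) : ℂ) * Complex.exp (((2*ν*y : ℝ):ℂ) * Complex.I)
      = c / (ν:ℂ)^2 := by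
    have h1 := hsplit ((x₀:ℂ) + (y:ℂ)*Complex.I)
    rw [hz₀reim.1, hz₀reim.2] at h1
    rw [← h1, hid]
  set Ey : ℂ := Complex.exp (((2*ν*y : ℝ):ℂ) * Complex.I) with hEy_def
  set e₀ : ℂ := (Real.exp (2*ν*x₀) : ℂ) with he₀_def
  have he₀ : e₀ ≠ 0 := by
    rw [he₀_def]
    exact_mod_cast Real.exp_ne_zero _
  have hcval : c = (ν:ℂ)^2 * e₀ * Ey := by
    have := hid'
    rw [eq_div_iff hν2] at this
    rw [← this]; ring
  -- frontier estimate
  have hfront : ∀ z ∈ frontier R, M - ε - 3/ν^2 ≤ ‖f z‖ := by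
    intro z hz
    rw [hRfr] at hz
    rcases hz with hz | hz
    · -- horizontal sides
      rw [Complex.mem_reProdIm] at hz
      obtain ⟨hre, him⟩ := hz
      rw [mem_Icc] at hre
      have h1 : a ≤ z.re := hre.1
      have h2 : z.re ≤ 0 := hre.2
      have him' : z.im = y - r ∨ z.im = y + r := by simpa using him
      have h3 : y - r ≤ z.im := by rcases him' with h | h <;> rw [h] <;> linarith
      have h4 : z.im ≤ y + r := by rcases him' with h | h <;> rw [h] <;> linarith
      have h2νr : 2*ν*r = Real.pi := by rw [hr_def]; field_simp
      have hEyI : Complex.exp (((2*ν*z.im : ℝ):ℂ) * Complex.I) = -Ey := by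
        rcases him' with h | h
        · have harg : ((2*ν*z.im : ℝ):ℂ) * Complex.I
              = ((2*ν*y : ℝ):ℂ) * Complex.I - (Real.pi:ℂ) * Complex.I := by
            rw [h, ← h2νr]; push_cast; ring
          rw [harg, Complex.exp_sub, Complex.exp_pi_mul_I, hEy_def]
          field_simp
        · have harg : ((2*ν*z.im : ℝ):ℂ) * Complex.I
              = ((2*ν*y : ℝ):ℂ) * Complex.I + (Real.pi:ℂ) * Complex.I := by
            rw [h, ← h2νr]; push_cast; ring
          rw [harg, Complex.exp_add, Complex.exp_pi_mul_I, hEy_def]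
          ring
      set u : ℝ := Real.exp (2*ν*z.re) / Real.exp (2*ν*x₀) with hu_def
      have hu0 : 0 < u := by rw [hu_def]; positivity
      set AG : ℂ := (1 - (w z)^2) * (1 + g₁ z) with hAG_def
      set X : ℂ := -(u:ℂ) * c * AG with hX_def
      have hu_c : (u:ℂ) * e₀ = (Real.exp (2*ν*z.re) : ℂ) := by
        rw [hu_def, he₀_def, ← Complex.ofReal_mul]
        congr 1
        field_simp
      have hu_c' : (u:ℂ) = (Real.exp (2*ν*z.re) : ℂ) / e₀ := by
        rw [eq_div_iff he₀]; exact hu_c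
      have hfz_eq : f z = X - c - g₃ z := by
        have hX' : (ν:ℂ)^2 * (1 - (w z)^2) * Complex.exp (2*(ν:ℂ)*z) * (1 + g₁ z) = X := by
          rw [hsplit z, hEyI, hX_def, hAG_def, hcval, hu_c']
          field_simp
        show (ν:ℂ)^2 * (1 - (w z)^2) * Complex.exp (2*(ν:ℂ)*z) * (1 + g₁ z) - c - g₃ z
            = X - c - g₃ z
        rw [hX']
      have hXc : Complex.normSq c ≤ Complex.normSq (X - c) := by
        rw [Complex.normSq_sub]
        have hXconj : X * (starRingEnd ℂ) c
            = ((-(u * Complex.normSq c) : ℝ) : ℂ) * AG := by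
          rw [hX_def]
          have : -(u:ℂ) * c * AG * (starRingEnd ℂ) c = -(u:ℂ) * (c * (starRingEnd ℂ) c) * AG := by
            ring
          rw [this, Complex.mul_conj]
          push_cast
          ring
        have hre : (X * (starRingEnd ℂ) c).re = -(u * Complex.normSq c) * AG.re := by
          rw [hXconj]
          simp [Complex.mul_re]
        rw [hre]
        have hAGre : δ/2 ≤ AG.re := hReAG z h1 h2 h3 h4
        have h8 : 0 ≤ u * Complex.normSq c * AG.re := by
          apply mul_nonneg (mul_nonneg hu0.le (Complex.normSq_nonneg c))
          linarith
        nlinarith [Complex.normSq_nonneg X]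
      have hXcabs : M ≤ ‖X - c‖ := by
        rw [← hc, Complex.norm_def, Complex.norm_def]
        exact Real.sqrt_le_sqrt hXc
      have h9 : ‖X - c‖ ≤ ‖X - c - g₃ z‖ + ‖g₃ z‖ := by
        calc ‖X - c‖ = ‖(X - c - g₃ z) + g₃ z‖ := by congr 1; ring
        _ ≤ _ := norm_add_le _ _
      have hg₃z := hg₃ z h1 h2 h3 h4
      have hν2' : (0:ℝ) < 3/ν^2 := by positivity
      rw [hfz_eq]
      linarith
    · -- vertical sides
      rw [Complex.mem_reProdIm] at hz
      obtain ⟨hre, him⟩ := hz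
      rw [mem_Icc] at him
      have h3 : y - r ≤ z.im := him.1
      have h4 : z.im ≤ y + r := him.2
      have hre' : z.re = a ∨ z.re = 0 := by simpa using hre
      have h1 : a ≤ z.re := by rcases hre' with h | h <;> rw [h] <;> linarith
      have h2 : z.re ≤ 0 := by rcases hre' with h | h <;> rw [h] <;> linarith
      have h2re : (2*(ν:ℂ)*z).re = 2*ν*z.re := by
        simp [Complex.mul_re]
      have habsAEG : ‖(ν:ℂ)^2 * (1-(w z)^2) * Complex.exp (2*(ν:ℂ)*z) * (1+g₁ z)‖
          = ν^2 * ‖1-(w z)^2‖ * Real.exp (2*ν*z.re) * ‖1+g₁ z‖ := by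
        rw [norm_mul, norm_mul, norm_mul, Complex.norm_exp, h2re]
        congr 2
        simp [norm_pow, Complex.norm_real, Real.norm_eq_abs, abs_of_pos hν0]
      have htri1 := tri1 ((ν:ℂ)^2 * (1-(w z)^2) * Complex.exp (2*(ν:ℂ)*z) * (1+g₁ z)) c (g₃ z)
      have htri2 := tri2 ((ν:ℂ)^2 * (1-(w z)^2) * Complex.exp (2*(ν:ℂ)*z) * (1+g₁ z)) c (g₃ z)
      have hg₃z := hg₃ z h1 h2 h3 h4
      have hA3z := hA3 z h1 h2 h3 h4
      have hA1z := hA1 z h1 h2 h3 h4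
      have hG1z := hG1 z h1 h2 h3 h4
      have hG2z := hG2 z h1 h2 h3 h4
      have hfz : f z = (ν:ℂ)^2 * (1-(w z)^2) * Complex.exp (2*(ν:ℂ)*z) * (1+g₁ z) - c - g₃ z := rfl
      rcases hre' with h | h
      · -- left side : z.re = a
        have hexpa : Real.exp (2*ν*z.re) = (ν^4)⁻¹ := by
          rw [h, ha_def]
          have harg : 2*ν*(-(2*Real.log ν)/ν) = -(4*Real.log ν) := by field_simp; ring
          rw [harg, Real.exp_neg]
          congr 1
          rw [show (4:ℝ)*Real.log ν = Real.log (ν^4) by rw [Real.log_pow]; push_cast; ring]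
          exact Real.exp_log (by positivity)
        have hsmall : ‖(ν:ℂ)^2 * (1-(w z)^2) * Complex.exp (2*(ν:ℂ)*z) * (1+g₁ z)‖
            ≤ 3/ν^2 := by
          rw [habsAEG, hexpa]
          have hν4 : (0:ℝ) < ν^4 := by positivity
          have e1 : ν^2 * ‖1-(w z)^2‖ * (ν^4)⁻¹ * ‖1+g₁ z‖
              ≤ ν^2 * 2 * (ν^4)⁻¹ * (3/2) := by
            have hG32 : ‖1+g₁ z‖ ≤ 3/2 := by linarith
            have hp : (0:ℝ) < ν^2 * (ν^4)⁻¹ := by positivity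
            have h1 : ‖1-(w z)^2‖ * ‖1+g₁ z‖ ≤ 2 * (3/2) :=
              mul_le_mul hA1z hG32 (norm_nonneg _) (by norm_num)
            calc ν^2 * ‖1-(w z)^2‖ * (ν^4)⁻¹ * ‖1+g₁ z‖
                = (ν^2 * (ν^4)⁻¹) * (‖1-(w z)^2‖ * ‖1+g₁ z‖) := by ring
            _ ≤ (ν^2 * (ν^4)⁻¹) * (2 * (3/2)) := mul_le_mul_of_nonneg_left h1 hp.le
            _ = ν^2 * 2 * (ν^4)⁻¹ * (3/2) := by ring
          have e2 : ν^2 * 2 * (ν^4)⁻¹ * (3/2:ℝ) = 3/ν^2 := by field_simp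
          linarith
        rw [hc] at htri2
        rw [hfz]
        linarith
      · -- right side : z.re = 0
        have hexpa : Real.exp (2*ν*z.re) = 1 := by rw [h]; simp
        have hbig2 : ν^2*δ/2 ≤ ‖(ν:ℂ)^2 * (1-(w z)^2) * Complex.exp (2*(ν:ℂ)*z) * (1+g₁ z)‖ := by
          rw [habsAEG, hexpa]
          have hν2p : (0:ℝ) < ν^2 := by positivity
          have hG12 : (1:ℝ)/2 ≤ ‖1+g₁ z‖ := by linarith
          have h1 : δ * (1/2) ≤ ‖1-(w z)^2‖ * ‖1+g₁ z‖ :=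
            mul_le_mul hA3z hG12 (by norm_num) (norm_nonneg _)
          calc ν^2*δ/2 = ν^2 * (δ * (1/2)) := by ring
          _ ≤ ν^2 * (‖1-(w z)^2‖ * ‖1+g₁ z‖) :=
              mul_le_mul_of_nonneg_left h1 hν2p.le
          _ = ν^2 * ‖1-(w z)^2‖ * 1 * ‖1+g₁ z‖ := by ring
        rw [hc] at htri1
        rw [hfz]
        have hν2' : (0:ℝ) < 3/ν^2 := by positivity
        linarith
  -- interior point
  set z₀ : ℂ := (x₀:ℂ) + (y:ℂ)*Complex.I with hz₀_def
  have hz₀re : z₀.re = x₀ := hz₀reim.1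
  have hz₀im : z₀.im = y := hz₀reim.2
  have hz₀R : z₀ ∈ R := by
    rw [hR_def, Complex.mem_reProdIm, hz₀re, hz₀im]
    exact ⟨⟨hx₀l, hx₀r⟩, ⟨by linarith, by linarith⟩⟩
  have hz₀1 : a ≤ z₀.re := by rw [hz₀re]; linarith
  have hz₀2 : z₀.re ≤ 0 := by rw [hz₀re]; linarith
  have hz₀3 : y - r ≤ z₀.im := by rw [hz₀im]; linarith
  have hz₀4 : z₀.im ≤ y + r := by rw [hz₀im]; linarith
  have hfz₀_eq : f z₀ = c * ((1-(w z₀)^2)*(1+g₁ z₀) - 1) - g₃ z₀ := by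
    rw [hf_def]
    simp only []
    rw [hz₀_def, hid]
    have hνc : (ν:ℂ) ≠ 0 := by exact_mod_cast hν0.ne'
    field_simp
  have hABS : ‖(1-(w z₀)^2)*(1+g₁ z₀) - 1‖ ≤ 1 - δ + 2*ε := by
    have hwz := hw z₀ hz₀1 hz₀2 hz₀3 hz₀4
    have hg1z := hg₁ z₀ hz₀1 hz₀2 hz₀3 hz₀4
    have e1 : ‖(1-(w z₀)^2)*(1+g₁ z₀) - 1‖
        = ‖(-(w z₀)^2 + g₁ z₀) + (-((w z₀)^2 * g₁ z₀))‖ := by congr 1; ring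
    rw [e1]
    have e2 := norm_add_le (-(w z₀)^2 + g₁ z₀) (-((w z₀)^2 * g₁ z₀))
    have e3 := norm_add_le (-(w z₀)^2) (g₁ z₀)
    rw [norm_neg] at e3
    have e4 : ‖-((w z₀)^2 * g₁ z₀)‖ ≤ (1-δ)*ε := by
      rw [norm_neg, norm_mul]
      have := norm_nonneg (g₁ z₀)
      nlinarith
    have e5 : (1-δ)*ε ≤ ε := by nlinarith
    linarith
  have hint : ‖f z₀‖ < M - ε - 3/ν^2 := by
    have hg3z := hg₃ z₀ hz₀1 hz₀2 hz₀3 hz₀4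
    have e6 : ‖f z₀‖
        ≤ ‖c * ((1-(w z₀)^2)*(1+g₁ z₀) - 1)‖ + ‖g₃ z₀‖ := by
      rw [hfz₀_eq]
      calc ‖c * ((1-(w z₀)^2)*(1+g₁ z₀) - 1) - g₃ z₀‖
          = ‖c * ((1-(w z₀)^2)*(1+g₁ z₀) - 1) + (-(g₃ z₀))‖ := by
            rw [sub_eq_add_neg]
      _ ≤ ‖c * ((1-(w z₀)^2)*(1+g₁ z₀) - 1)‖ + ‖-(g₃ z₀)‖ :=
          norm_add_le _ _
      _ = _ := by rw [norm_neg]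
    rw [norm_mul, hc] at e6
    have e7 : M * ‖(1-(w z₀)^2)*(1+g₁ z₀) - 1‖ ≤ M * (1-δ+2*ε) :=
      mul_le_mul_of_nonneg_left hABS hM0.le
    have e8 : M * (1-δ+2*ε) = M*(1-δ) + 2*M*ε := by ring
    linarith
  -- apply minimal modulus
  have hclU : closure R ⊆ U := by
    rw [hRcl]
    intro z hz
    rw [Complex.mem_reProdIm, mem_Icc, mem_Icc] at hz
    exact hmemU z hz.1.1 hz.1.2 hz.2.1 hz.2.2
  have hRb : Bornology.IsBounded R :=
    (Metric.isBounded_Ioo a 0).reProdIm (Metric.isBounded_Ioo (y-r) (y+r))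
  have hdc : DiffContOnCl ℂ f R := (hfd.mono hclU).diffContOnCl
  obtain ⟨z, hzR, hz0⟩ := exists_zero_of_lt_min_frontier hRb hdc hz₀R hfront hint
  rw [hR_def, Complex.mem_reProdIm, mem_Ioo, mem_Ioo] at hzR
  exact ⟨z, hz0, hzR.1.1, hzR.1.2, hzR.2.1, hzR.2.2⟩


lemma exp_id {ν Mc x₀ : ℝ} (hν0 : 0 < ν) (hMc : 0 < Mc)
    (hx₀ : 2*ν*x₀ = Real.log Mc - 2*Real.log ν) (k : ℤ) (σ : ℝ) (hσ : σ = 1 ∨ σ = -1) :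
    Complex.exp (2*(ν:ℂ)*((x₀:ℂ) + ((Real.pi/ν*((k:ℝ) + σ/4) : ℝ):ℂ)*Complex.I))
      = ((Mc:ℝ):ℂ) * (σ:ℂ) * Complex.I / (ν:ℂ)^2 := by
  have harg : 2*(ν:ℂ)*((x₀:ℂ) + ((Real.pi/ν*((k:ℝ) + σ/4) : ℝ):ℂ)*Complex.I)
      = ((2*ν*x₀ : ℝ):ℂ) + ((2*ν*(Real.pi/ν*((k:ℝ) + σ/4)) : ℝ):ℂ)*Complex.I := by
    push_cast; ring
  rw [harg, Complex.exp_add]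
  have h1 : Complex.exp (((2*ν*x₀ : ℝ):ℂ)) = ((Mc/ν^2 : ℝ):ℂ) := by
    rw [← Complex.ofReal_exp]
    congr 1
    rw [hx₀, Real.exp_sub, Real.exp_log hMc]
    congr 1
    rw [show (2:ℝ)*Real.log ν = Real.log (ν^2) by rw [Real.log_pow]; push_cast; ring]
    exact Real.exp_log (by positivity)
  have h2 : 2*ν*(Real.pi/ν*((k:ℝ) + σ/4)) = 2*Real.pi*(k:ℝ) + Real.pi*σ/2 := by
    field_simp; ring
  have h3 : Complex.exp (((2*ν*(Real.pi/ν*((k:ℝ) + σ/4)) : ℝ):ℂ)*Complex.I)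
      = (σ:ℂ) * Complex.I := by
    rw [h2]
    have harg2 : ((2*Real.pi*(k:ℝ) + Real.pi*σ/2 : ℝ):ℂ)*Complex.I
        = (k:ℂ)*(2*(Real.pi:ℂ)*Complex.I) + ((Real.pi*σ/2 : ℝ):ℂ)*Complex.I := by
      push_cast; ring
    rw [harg2, Complex.exp_add, Complex.exp_int_mul_two_pi_mul_I, one_mul]
    rcases hσ with h | h <;> rw [h]
    · rw [show ((Real.pi*1/2 : ℝ):ℂ) = ((Real.pi/2:ℝ):ℂ) by norm_num]
      rw [Complex.exp_mul_I]
      rw [show Complex.cos ((Real.pi/2:ℝ):ℂ) = ((Real.cos (Real.pi/2) : ℝ):ℂ) from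
        (Complex.ofReal_cos _).symm]
      rw [show Complex.sin ((Real.pi/2:ℝ):ℂ) = ((Real.sin (Real.pi/2) : ℝ):ℂ) from
        (Complex.ofReal_sin _).symm]
      simp [Real.cos_pi_div_two, Real.sin_pi_div_two]
    · rw [show ((Real.pi*(-1)/2 : ℝ):ℂ) = ((-(Real.pi/2):ℝ):ℂ) by (push_cast; ring)]
      rw [Complex.exp_mul_I]
      rw [show Complex.cos ((-(Real.pi/2):ℝ):ℂ) = ((Real.cos (-(Real.pi/2)) : ℝ):ℂ) from
        (Complex.ofReal_cos _).symm]
      rw [show Complex.sin ((-(Real.pi/2):ℝ):ℂ) = ((Real.sin (-(Real.pi/2)) : ℝ):ℂ) from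
        (Complex.ofReal_sin _).symm]
      rw [Real.cos_neg, Real.sin_neg]
      simp [Real.cos_pi_div_two, Real.sin_pi_div_two]
  rw [h1, h3]
  push_cast
  ring

lemma fdiff {ν : ℝ} {c : ℂ} {w g₁ g₃ : ℂ → ℂ} {U : Set ℂ}
    (hwd : DifferentiableOn ℂ w U) (hg₁d : DifferentiableOn ℂ g₁ U)
    (hg₃d : DifferentiableOn ℂ g₃ U) :
    DifferentiableOn ℂ (fun ρ : ℂ =>
      (ν:ℂ)^2 * (1 - (w ρ)^2) * Complex.exp (2*(ν:ℂ)*ρ) * (1 + g₁ ρ) - c - g₃ ρ) U := by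
  apply DifferentiableOn.sub _ hg₃d
  apply DifferentiableOn.sub _ (differentiableOn_const c)
  apply DifferentiableOn.mul
  · apply DifferentiableOn.mul
    · exact (differentiableOn_const _).mul ((differentiableOn_const _).sub (hwd.pow 2))
    · exact (Complex.differentiable_exp.comp
        ((differentiable_const _).mul differentiable_id)).differentiableOn
  · exact (differentiableOn_const _).add hg₁d

lemma f_ne_at {ν δ ε M : ℝ} {c W G₁ G₃ : ℂ}
    (hν0 : 0 < ν) (hδ0 : 0 < δ) (hε2 : ε ≤ 1/2) (hM0 : 0 < M) (hc : ‖c‖ = M)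
    (hbig : 2*M + ε ≤ ν^2*δ/2)
    (hW : ‖W^2‖ ≤ 1 - δ) (hG₁ : ‖G₁‖ ≤ ε) (hG₃ : ‖G₃‖ ≤ ε) :
    (ν:ℂ)^2 * (1 - W^2) * Complex.exp (2*(ν:ℂ)*(0:ℂ)) * (1 + G₁) - c - G₃ ≠ 0 := by
  have hε0 : 0 ≤ ε := le_trans (norm_nonneg G₁) hG₁
  have hA3 : δ ≤ ‖1 - W^2‖ := by
    have h1 : δ ≤ (1 - W^2).re := by
      have := Complex.re_le_norm (W^2)
      simp only [Complex.sub_re, Complex.one_re]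
      linarith
    exact le_trans h1 (Complex.re_le_norm _)
  have hG2 : 1 - ε ≤ ‖1 + G₁‖ := by
    have h5 : (1:ℝ) ≤ ‖1 + G₁‖ + ‖G₁‖ := by
      have := norm_add_le (1 + G₁) (-G₁)
      simpa using this
    linarith
  have hexp0 : Complex.exp (2*(ν:ℂ)*(0:ℂ)) = 1 := by simp
  have habs : ‖(ν:ℂ)^2 * (1 - W^2) * Complex.exp (2*(ν:ℂ)*(0:ℂ)) * (1 + G₁)‖
      = ν^2 * ‖1 - W^2‖ * ‖1 + G₁‖ := by
    rw [hexp0, norm_mul, norm_mul, norm_mul]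
    simp [norm_pow, Complex.norm_real, Real.norm_eq_abs, abs_of_pos hν0]
  have hν2p : (0:ℝ) < ν^2 := by positivity
  have hbig2 : ν^2*δ/2 ≤ ‖(ν:ℂ)^2 * (1 - W^2) * Complex.exp (2*(ν:ℂ)*(0:ℂ)) * (1 + G₁)‖ := by
    rw [habs]
    have hG12 : (1:ℝ)/2 ≤ ‖1 + G₁‖ := by linarith
    have h1 : δ * (1/2) ≤ ‖1 - W^2‖ * ‖1 + G₁‖ :=
      mul_le_mul hA3 hG12 (by norm_num) (norm_nonneg _)
    calc ν^2*δ/2 = ν^2 * (δ * (1/2)) := by ring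
    _ ≤ ν^2 * (‖1 - W^2‖ * ‖1 + G₁‖) :=
        mul_le_mul_of_nonneg_left h1 hν2p.le
    _ = ν^2 * ‖1 - W^2‖ * ‖1 + G₁‖ := by ring
  intro h0
  have heq : (ν:ℂ)^2 * (1 - W^2) * Complex.exp (2*(ν:ℂ)*(0:ℂ)) * (1 + G₁) = c + G₃ := by
    linear_combination h0
  have habs2 : ‖(ν:ℂ)^2 * (1 - W^2) * Complex.exp (2*(ν:ℂ)*(0:ℂ)) * (1 + G₁)‖
      ≤ M + ε := by
    rw [heq]
    calc ‖c + G₃‖ ≤ ‖c‖ + ‖G₃‖ := norm_add_le _ _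
    _ ≤ M + ε := by rw [hc]; linarith
  have h2 := le_trans hbig (le_trans hbig2 habs2)
  linarith

lemma order_ne_zero_of_eq_zero {f : ℂ → ℂ} {z : ℂ} (hz : AnalyticAt ℂ f z) (h0 : f z = 0) :
    analyticOrderAt f z ≠ 0 := by
  exact hz.analyticOrderAt_ne_zero.mpr h0

end StmtHelpers

set_option maxHeartbeats 1600000

/-- Fix `m ∈ ℤ \ {0}`, `V₀ > 0`, `δ ∈ (0,1)`, `C₀ > 0`, `h ∈ (0, π/8)`.
There is `ν₀ > 0` such that for every `ν ≥ ν₀` the following holds.  Let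
`S_ν = {ρ : −(2 log ν)/ν ≤ Re ρ ≤ 0, −π ≤ Im ρ ≤ 0}`, and let `w, g₁, g₃` be holomorphic on
an open neighborhood `U` of `S_ν` with `|w(ρ)²| ≤ 1 − δ`, `|g₁(ρ)| ≤ C₀/ν`, `|g₃(ρ)| ≤ C₀/ν`
on `S_ν`.  Put `f(ρ) = ν² (1 − w(ρ)²) e^{2νρ} (1 + g₁(ρ)) − i m V₀/4 − g₃(ρ)`.  Then:
(i) for every `k ∈ ℤ` with `Im ρ_k = (π/ν)(k + sgn(m)/4) ∈ (−π + 2h, −2h)`, `f` has a zero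
`ρ` with `−(2 log ν)/ν < Re ρ < 0` and `|Im ρ − Im ρ_k| < π/ν`;
(ii) `f` has at least `ν(π − 4h)/π − 2` zeros, counted with multiplicity, in the open
rectangle `{−(2 log ν)/ν < Re ρ < 0, −π + 2h < Im ρ < −2h}` (the function `df : ℂ → ℕ`
records the vanishing order of `f`, so the count with multiplicity is the finite sum of
`df` over the rectangle). -/
theorem stmt4 (m : ℤ) (hm : m ≠ 0) (V₀ δ C₀ h : ℝ)
    (hV₀ : 0 < V₀) (hδ0 : 0 < δ) (hδ1 : δ < 1) (hC₀ : 0 < C₀)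
    (hh0 : 0 < h) (hh1 : h < π / 8) :
    ∃ ν₀ : ℝ, 0 < ν₀ ∧ ∀ ν : ℝ, ν₀ ≤ ν →
      ∀ (U : Set ℂ) (w g₁ g₃ : ℂ → ℂ),
        IsOpen U →
        {ρ : ℂ | -(2 * Real.log ν) / ν ≤ ρ.re ∧ ρ.re ≤ 0 ∧ -π ≤ ρ.im ∧ ρ.im ≤ 0} ⊆ U →
        DifferentiableOn ℂ w U → DifferentiableOn ℂ g₁ U → DifferentiableOn ℂ g₃ U →
        (∀ ρ ∈ {ρ : ℂ | -(2 * Real.log ν) / ν ≤ ρ.re ∧ ρ.re ≤ 0 ∧ -π ≤ ρ.im ∧ ρ.im ≤ 0},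
          ‖(w ρ) ^ 2‖ ≤ 1 - δ) →
        (∀ ρ ∈ {ρ : ℂ | -(2 * Real.log ν) / ν ≤ ρ.re ∧ ρ.re ≤ 0 ∧ -π ≤ ρ.im ∧ ρ.im ≤ 0},
          ‖g₁ ρ‖ ≤ C₀ / ν) →
        (∀ ρ ∈ {ρ : ℂ | -(2 * Real.log ν) / ν ≤ ρ.re ∧ ρ.re ≤ 0 ∧ -π ≤ ρ.im ∧ ρ.im ≤ 0},
          ‖g₃ ρ‖ ≤ C₀ / ν) →
        ((∀ k : ℤ, (π / ν) * ((k : ℝ) + (Int.sign m : ℝ) / 4) ∈ Set.Ioo (-π + 2 * h) (-(2 * h)) →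
            ∃ ρ : ℂ,
              (ν : ℂ) ^ 2 * (1 - (w ρ) ^ 2) * Complex.exp (2 * (ν : ℂ) * ρ) * (1 + g₁ ρ)
                  - Complex.I * (m : ℂ) * (V₀ : ℂ) / 4 - g₃ ρ = 0
                ∧ -(2 * Real.log ν) / ν < ρ.re ∧ ρ.re < 0
                ∧ |ρ.im - (π / ν) * ((k : ℝ) + (Int.sign m : ℝ) / 4)| < π / ν)
          ∧ ∀ df : ℂ → ℕ,
              (∀ (z : ℂ) (hz : AnalyticAt ℂ (fun ρ : ℂ =>
                  (ν : ℂ) ^ 2 * (1 - (w ρ) ^ 2) * Complex.exp (2 * (ν : ℂ) * ρ) * (1 + g₁ ρ)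
                    - Complex.I * (m : ℂ) * (V₀ : ℂ) / 4 - g₃ ρ) z),
                (df z : ℕ∞) = analyticOrderAt (fun ρ : ℂ =>
                  (ν : ℂ) ^ 2 * (1 - (w ρ) ^ 2) * Complex.exp (2 * (ν : ℂ) * ρ) * (1 + g₁ ρ)
                    - Complex.I * (m : ℂ) * (V₀ : ℂ) / 4 - g₃ ρ) z) →
              ν * (π - 4 * h) / π - 2
                ≤ ∑ᶠ z ∈ {ρ : ℂ | -(2 * Real.log ν) / ν < ρ.re ∧ ρ.re < 0
                    ∧ -π + 2 * h < ρ.im ∧ ρ.im < -(2 * h)}, (df z : ℝ)) := by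
  have hπ : (0:ℝ) < π := Real.pi_pos
  have hm' : ((m:ℝ)) ≠ 0 := Int.cast_ne_zero.mpr hm
  have habsm : 0 < |(m:ℝ)| := abs_pos.mpr hm'
  set Mc : ℝ := |(m:ℝ)| * V₀ / 4 with hMc_def
  have hMc : 0 < Mc := by rw [hMc_def]; positivity
  set c : ℂ := Complex.I * (m : ℂ) * (V₀ : ℂ) / 4 with hc_def
  have hσ : (Int.sign m : ℝ) = 1 ∨ (Int.sign m : ℝ) = -1 := by
    rcases lt_or_gt_of_ne hm with hlt | hgt
    · right
      have : Int.sign m = -1 := Int.sign_eq_neg_one_iff_neg.mpr hlt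
      rw [this]; norm_num
    · left
      have : Int.sign m = 1 := Int.sign_eq_one_iff_pos.mpr hgt
      rw [this]; norm_num
  have hms : (Int.sign m : ℝ) * |(m:ℝ)| = (m:ℝ) := by exact_mod_cast Int.sign_mul_abs m
  have hmC : (m:ℂ) = ((Int.sign m : ℝ):ℂ) * ((|(m:ℝ)|:ℝ):ℂ) := by exact_mod_cast hms.symm
  have hcs : c = ((Mc:ℝ):ℂ) * ((Int.sign m : ℝ):ℂ) * Complex.I := by
    rw [hc_def, hMc_def, hmC]
    push_cast
    ring
  have hcabs : ‖c‖ = Mc := by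
    rw [hcs, norm_mul, norm_mul, Complex.norm_I, Complex.norm_real, Real.norm_eq_abs, Complex.norm_real, Real.norm_eq_abs,
      abs_of_pos hMc]
    rcases hσ with hs | hs <;> rw [hs] <;> norm_num
  -- positivity facts for ν₀
  have p1 : 0 < 1/Mc := by positivity
  have p3 : 0 < 4*C₀/δ := by positivity
  have p4 : 0 < (4*Mc + 4*C₀ + 2)/δ := by positivity
  have p5 : 0 < 2*((2*Mc+2)*C₀ + 3)/(Mc*δ) := by positivity
  have p6 : 0 < π/h := by positivity
  refine ⟨2 + Mc + 1/Mc + 4*C₀ + 4*C₀/δ + (4*Mc + 4*C₀ + 2)/δ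
      + 2*((2*Mc+2)*C₀ + 3)/(Mc*δ) + π/h, by positivity, ?_⟩
  intro ν hν U w g₁ g₃ hUopen hUsub hwd hg₁d hg₃d hw hg₁ hg₃
  -- numeric consequences
  have hν2' : 2 ≤ ν := by linarith
  have hνMc : 2 + Mc ≤ ν := by linarith
  have hνinv : 1/Mc ≤ ν := by linarith
  have hν4C : 4*C₀ ≤ ν := by linarith
  have hν4Cδ : 4*C₀/δ ≤ ν := by linarith
  have hνbigc : (4*Mc + 4*C₀ + 2)/δ ≤ ν := by linarith
  have hνgapc : 2*((2*Mc+2)*C₀ + 3)/(Mc*δ) ≤ ν := by linarith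
  have hνπh : π/h ≤ ν := by linarith
  have hν1 : 1 < ν := by linarith
  have hν0 : 0 < ν := by linarith
  have hε0 : 0 < C₀/ν := by positivity
  have hε2 : C₀/ν ≤ 1/2 := by rw [div_le_iff₀ hν0]; nlinarith
  have hεδ : 2*(C₀/ν) ≤ δ/2 := by
    have h' : C₀/ν ≤ δ/4 := by
      rw [div_le_div_iff₀ hν0 (by norm_num : (0:ℝ) < 4)]
      have := (div_le_iff₀ hδ0).mp hν4Cδ
      nlinarith
    linarith
  have hνν : ν ≤ ν^2 := by nlinarith [mul_nonneg hν0.le (by linarith : (0:ℝ) ≤ ν - 1)]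
  have hbig : 2*Mc + C₀/ν ≤ ν^2*δ/2 := by
    have h1 : 4*Mc + 4*C₀ + 2 ≤ ν*δ := (div_le_iff₀ hδ0).mp hνbigc
    have hA : ν*δ ≤ ν^2*δ := mul_le_mul_of_nonneg_right hνν hδ0.le
    have hεC : C₀/ν ≤ C₀ := by rw [div_le_iff₀ hν0]; nlinarith
    linarith
  have hgap : Mc*(1-δ) + 2*Mc*(C₀/ν) + C₀/ν < Mc - C₀/ν - 3/ν^2 := by
    have hQ : ((2*Mc+2)*C₀+3)/ν ≤ Mc*δ/2 := by
      rw [div_le_div_iff₀ hν0 (by norm_num : (0:ℝ) < 2)]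
      have := (div_le_iff₀ (mul_pos hMc hδ0)).mp hνgapc
      nlinarith
    have h3ν2 : 3/ν^2 ≤ 3/ν := by
      rw [div_le_div_iff₀ (by positivity) hν0]; nlinarith
    have e1 : (2*Mc+2)*(C₀/ν) + 3/ν = ((2*Mc+2)*C₀+3)/ν := by field_simp
    have hsplit : (2*Mc+2)*(C₀/ν) + 3/ν ≤ Mc*δ/2 := by rw [e1]; exact hQ
    have hMδ : 0 < Mc*δ := mul_pos hMc hδ0
    have e2 : Mc*(1-δ) = Mc - Mc*δ := by ring
    have e3 : (2*Mc+2)*(C₀/ν) = 2*(Mc*(C₀/ν)) + 2*(C₀/ν) := by ring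
    nlinarith
  have hrh : π/(2*ν) ≤ h := by
    rw [div_le_iff₀ (by positivity)]
    have := (div_le_iff₀ hh0).mp hνπh
    nlinarith
  have hr0 : 0 < π/(2*ν) := by positivity
  -- x₀
  have hlogν : 0 < Real.log ν := Real.log_pos hν1
  set x₀ : ℝ := Real.log Mc/(2*ν) - Real.log ν/ν with hx₀_def
  have hx₀eq : 2*ν*x₀ = Real.log Mc - 2*Real.log ν := by
    rw [hx₀_def]; field_simp
  have hMclt : Mc < ν^2 := by nlinarith
  have hlogMc : Real.log Mc < 2*Real.log ν := by
    have h1 := Real.log_lt_log hMc hMclt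
    rwa [show Real.log (ν^2) = 2*Real.log ν by
      rw [Real.log_pow]; push_cast; ring] at h1
  have hinvlt : -(2*Real.log ν) < Real.log Mc := by
    have hMcν : 1 ≤ ν*Mc := (div_le_iff₀ hMc).mp hνinv
    have h1 : 1/ν^2 < Mc := by
      rw [div_lt_iff₀ (by positivity : (0:ℝ) < ν^2)]
      nlinarith
    have h2 := Real.log_lt_log (by positivity : (0:ℝ) < 1/ν^2) h1
    rwa [show Real.log (1/ν^2) = -(2*Real.log ν) by
      rw [one_div, Real.log_inv, Real.log_pow]; push_cast; ring] at h2
  have hx₀r : x₀ < 0 := by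
    have h1 : 2*ν*x₀ < 0 := by rw [hx₀eq]; linarith
    nlinarith
  have hx₀l : -(2 * Real.log ν) / ν < x₀ := by
    rw [div_lt_iff₀ hν0]
    have e : 2*ν*x₀ = 2*(x₀*ν) := by ring
    linarith [hx₀eq, e ▸ hx₀eq]
  -- the key existence statement
  have hkey : ∀ k : ℤ, -π ≤ (π / ν) * ((k : ℝ) + (Int.sign m : ℝ) / 4) - π/(2*ν) →
      (π / ν) * ((k : ℝ) + (Int.sign m : ℝ) / 4) + π/(2*ν) ≤ 0 →
      ∃ ρ : ℂ,
        ((ν : ℂ) ^ 2 * (1 - (w ρ) ^ 2) * Complex.exp (2 * (ν : ℂ) * ρ) * (1 + g₁ ρ)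
          - c - g₃ ρ = 0)
        ∧ -(2 * Real.log ν) / ν < ρ.re ∧ ρ.re < 0
        ∧ (π / ν) * ((k : ℝ) + (Int.sign m : ℝ) / 4) - π/(2*ν) < ρ.im
        ∧ ρ.im < (π / ν) * ((k : ℝ) + (Int.sign m : ℝ) / 4) + π/(2*ν) := by
    intro k hk1 hk2
    have hid : Complex.exp (2 * (ν:ℂ) * ((x₀:ℂ)
        + (((π / ν) * ((k : ℝ) + (Int.sign m : ℝ) / 4) : ℝ):ℂ) * Complex.I)) = c / (ν:ℂ)^2 := by
      rw [hcs]
      exact exp_id hν0 hMc hx₀eq k _ hσ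
    exact key_rect hUopen hν1 hδ0 hδ1 hε0 hMc hcabs hε2 hεδ hbig hgap hx₀l hx₀r hid
      (fun ρ h1 h2 h3 h4 => hUsub ⟨h1, h2, by linarith, by linarith⟩)
      hwd hg₁d hg₃d
      (fun ρ h1 h2 h3 h4 => hw ρ ⟨h1, h2, by linarith, by linarith⟩)
      (fun ρ h1 h2 h3 h4 => hg₁ ρ ⟨h1, h2, by linarith, by linarith⟩)
      (fun ρ h1 h2 h3 h4 => hg₃ ρ ⟨h1, h2, by linarith, by linarith⟩)
  have hhalf : π/(2*ν) < π/ν := by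
    rw [div_lt_div_iff₀ (by positivity) hν0]
    nlinarith
  constructor
  · -- part (i)
    intro k hk
    rw [Set.mem_Ioo] at hk
    obtain ⟨ρ, h0, hr1, hr2, hi1, hi2⟩ := hkey k (by linarith) (by linarith)
    exact ⟨ρ, h0, hr1, hr2, by rw [abs_lt]; constructor <;> [linarith; linarith]⟩
  · -- part (ii)
    intro df hdf
    set F : ℂ → ℂ := fun ρ : ℂ =>
      (ν : ℂ) ^ 2 * (1 - (w ρ) ^ 2) * Complex.exp (2 * (ν : ℂ) * ρ) * (1 + g₁ ρ)
        - c - g₃ ρ with hF_def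
    have hFdiff : DifferentiableOn ℂ F U := fdiff hwd hg₁d hg₃d
    have hana : ∀ z ∈ U, AnalyticAt ℂ F z := fun z hz =>
      hFdiff.analyticAt (hUopen.mem_nhds hz)
    set a : ℝ := -(2 * Real.log ν) / ν with ha_def
    have ha0 : a < 0 := by
      rw [ha_def]
      apply div_neg_of_neg_of_pos _ hν0
      linarith
    set SS : Set ℂ := {ρ : ℂ | a < ρ.re ∧ ρ.re < 0 ∧ -π + 2 * h < ρ.im ∧ ρ.im < -(2 * h)}
      with hSS_def
    have hSsub : ∀ z : ℂ, z ∈ SS → (a ≤ z.re ∧ z.re ≤ 0 ∧ -π ≤ z.im ∧ z.im ≤ 0) := by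
      intro z hz
      obtain ⟨h1, h2, h3, h4⟩ := hz
      exact ⟨h1.le, h2.le, by linarith, by linarith⟩
    set K₂ : Set ℂ := (Icc a 0) ×ℂ (Icc (-π + 2*h) (-(2*h))) with hK₂_def
    have hK₂c : IsCompact K₂ := by
      rw [hK₂_def]
      exact Metric.isCompact_of_isClosed_isBounded (isClosed_Icc.reProdIm isClosed_Icc)
        ((Metric.isBounded_Icc _ _).reProdIm (Metric.isBounded_Icc _ _))
    have hK₂Sν : ∀ z ∈ K₂, (a ≤ z.re ∧ z.re ≤ 0 ∧ -π ≤ z.im ∧ z.im ≤ 0) := by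
      intro z hz
      rw [hK₂_def, Complex.mem_reProdIm, mem_Icc, mem_Icc] at hz
      exact ⟨hz.1.1, hz.1.2, by linarith [hz.2.1], by linarith [hz.2.2]⟩
    have hSK₂ : SS ⊆ K₂ := by
      intro z hz
      obtain ⟨h1, h2, h3, h4⟩ := hz
      rw [hK₂_def, Complex.mem_reProdIm, mem_Icc, mem_Icc]
      exact ⟨⟨h1.le, h2.le⟩, ⟨h3.le, h4.le⟩⟩
    have h0Sν : (0:ℂ) ∈ {ρ : ℂ | a ≤ ρ.re ∧ ρ.re ≤ 0 ∧ -π ≤ ρ.im ∧ ρ.im ≤ 0} := by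
      simp only [mem_setOf_eq, Complex.zero_re, Complex.zero_im]
      exact ⟨ha0.le, le_refl 0, by linarith, le_refl 0⟩
    have h0U : (0:ℂ) ∈ U := hUsub h0Sν
    have hVopen : IsOpen (connectedComponentIn U 0) := hUopen.connectedComponentIn
    have hVpre : IsPreconnected (connectedComponentIn U 0) := isPreconnected_connectedComponentIn
    have hSνconv : Convex ℝ {ρ : ℂ | a ≤ ρ.re ∧ ρ.re ≤ 0 ∧ -π ≤ ρ.im ∧ ρ.im ≤ 0} := by
      have he : {ρ : ℂ | a ≤ ρ.re ∧ ρ.re ≤ 0 ∧ -π ≤ ρ.im ∧ ρ.im ≤ 0}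
          = (Complex.reCLM : ℂ →L[ℝ] ℝ).toLinearMap ⁻¹' (Icc a 0)
            ∩ (Complex.imCLM : ℂ →L[ℝ] ℝ).toLinearMap ⁻¹' (Icc (-π) 0) := by
        ext ρ
        simp only [mem_setOf_eq, mem_inter_iff, mem_preimage, mem_Icc,
          ContinuousLinearMap.coe_coe, Complex.reCLM_apply, Complex.imCLM_apply]
        tauto
      rw [he]
      exact ((convex_Icc a 0).linear_preimage _).inter
        ((convex_Icc (-π) 0).linear_preimage _)
    have hSνV : {ρ : ℂ | a ≤ ρ.re ∧ ρ.re ≤ 0 ∧ -π ≤ ρ.im ∧ ρ.im ≤ 0}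
        ⊆ connectedComponentIn U 0 :=
      (hSνconv.isPreconnected).subset_connectedComponentIn h0Sν hUsub
    have hanaV : AnalyticOnNhd ℂ F (connectedComponentIn U 0) := fun z hz =>
      hana z (connectedComponentIn_subset U 0 hz)
    have hF0 : F 0 ≠ 0 :=
      f_ne_at (c := c) hν0 hδ0 hε2 hMc hcabs hbig (hw 0 h0Sν) (hg₁ 0 h0Sν) (hg₃ 0 h0Sν)
    have hZfin : {z : ℂ | z ∈ K₂ ∧ F z = 0}.Finite := by
      by_contra hinf
      have hinf' : {z : ℂ | z ∈ K₂ ∧ F z = 0}.Infinite := hinf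
      obtain ⟨x, hxK, hacc⟩ := hinf'.exists_accPt_of_subset_isCompact hK₂c
        (fun z hz => hz.1)
      have hfreq : ∃ᶠ z in nhdsWithin x {x}ᶜ, F z = 0 := by
        rw [accPt_iff_frequently] at hacc
        rw [frequently_nhdsWithin_iff]
        exact hacc.mono (fun z hz => ⟨hz.2.2, hz.1⟩)
      have hxV : x ∈ connectedComponentIn U 0 := hSνV (hK₂Sν x hxK)
      have hEq := hanaV.eqOn_zero_of_preconnected_of_frequently_eq_zero hVpre hxV hfreq
      exact hF0 (hEq (hSνV h0Sν))
    have hdfne : ∀ z : ℂ, z ∈ U → F z = 0 → 1 ≤ df z := by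
      intro z hzU hFz
      have hza := hana z hzU
      have hord := hdf z hza
      have hne := order_ne_zero_of_eq_zero hza hFz
      by_contra hlt
      push_neg at hlt
      have h0 : df z = 0 := Nat.lt_one_iff.mp hlt
      rw [h0] at hord
      simp only [Nat.cast_zero] at hord
      exact hne hord.symm
    have hTfin : (SS ∩ Function.support fun z => ((df z : ℝ))).Finite := by
      apply hZfin.subset
      rintro z ⟨hzS, hzsup⟩
      refine ⟨hSK₂ hzS, ?_⟩
      by_contra hFz
      have hzU : z ∈ U := hUsub (hSsub z hzS)
      have hza := hana z hzU
      have hord := hdf z hza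
      have h0 : analyticOrderAt F z = ((0:ℕ):ℕ∞) := by
        rw [Nat.cast_zero, hza.analyticOrderAt_eq_zero]
        exact hFz
      rw [h0] at hord
      have hdf0 : df z = 0 := by exact_mod_cast hord
      rw [Function.mem_support, hdf0] at hzsup
      simp at hzsup
    have hsum : ∑ᶠ z ∈ SS, ((df z : ℝ)) = ∑ z ∈ hTfin.toFinset, ((df z : ℝ)) :=
      finsum_mem_eq_sum _ hTfin
    set A' : ℝ := ν/π*(-π+2*h) + 1/2 - (Int.sign m : ℝ)/4 with hA'_def
    set B' : ℝ := ν/π*(-(2*h)) - 1/2 - (Int.sign m : ℝ)/4 with hB'_def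
    set k₁ : ℤ := ⌈A'⌉ with hk₁_def
    set k₂ : ℤ := ⌊B'⌋ with hk₂_def
    have hex : ∀ k : ℤ, ∃ z : ℂ, (k₁ ≤ k ∧ k ≤ k₂) →
        (z ∈ SS ∧ F z = 0
          ∧ |z.im - (π / ν) * ((k : ℝ) + (Int.sign m : ℝ) / 4)| < π/(2*ν)) := by
      intro k
      by_cases hk : k₁ ≤ k ∧ k ≤ k₂
      · obtain ⟨hkl, hku⟩ := hk
        have hkl' : A' ≤ (k:ℝ) := by
          refine le_trans (Int.le_ceil A') ?_
          exact_mod_cast hkl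
        have hku' : (k:ℝ) ≤ B' := by
          refine le_trans ?_ (Int.floor_le B')
          exact_mod_cast hku
        have hyk1 : -π + 2*h + π/(2*ν) ≤ (π / ν) * ((k : ℝ) + (Int.sign m : ℝ) / 4) := by
          have e : (π/ν) * (ν/π*(-π+2*h) + 1/2) = (-π+2*h) + π/(2*ν) := by
            field_simp
          have h1 : ν/π*(-π+2*h) + 1/2 ≤ (k:ℝ) + (Int.sign m : ℝ)/4 := by
            rw [hA'_def] at hkl'
            linarith
          have h2 := mul_le_mul_of_nonneg_left h1 (le_of_lt (by positivity : (0:ℝ) < π/ν))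
          rw [e] at h2
          linarith
        have hyk2 : (π / ν) * ((k : ℝ) + (Int.sign m : ℝ) / 4) ≤ -(2*h) - π/(2*ν) := by
          have e : (π/ν) * (ν/π*(-(2*h)) - 1/2) = -(2*h) - π/(2*ν) := by
            field_simp
          have h1 : (k:ℝ) + (Int.sign m : ℝ)/4 ≤ ν/π*(-(2*h)) - 1/2 := by
            rw [hB'_def] at hku'
            linarith
          have h2 := mul_le_mul_of_nonneg_left h1 (le_of_lt (by positivity : (0:ℝ) < π/ν))
          rw [e] at h2
          linarith
        obtain ⟨ρ, h0, hr1, hr2, hi1, hi2⟩ := hkey k (by linarith) (by linarith)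
        refine ⟨ρ, fun _ => ⟨⟨hr1, hr2, by linarith, by linarith⟩, h0, ?_⟩⟩
        rw [abs_lt]
        constructor <;> [linarith; linarith]
      · exact ⟨0, fun hk' => absurd hk' hk⟩
    choose Z hZ using hex
    clear_value A' B' k₁ k₂
    have h2r : π/(2*ν)*2 = π/ν := by
      field_simp
    have hinj : Set.InjOn Z ↑(Finset.Icc k₁ k₂) := by
      intro p hp q hq hpq
      by_contra hne
      simp only [Finset.coe_Icc, mem_Icc] at hp hq
      obtain ⟨_, _, hpim⟩ := hZ p ⟨hp.1, hp.2⟩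
      obtain ⟨_, _, hqim⟩ := hZ q ⟨hq.1, hq.2⟩
      rw [hpq] at hpim
      have hsep : π/ν ≤ |(π / ν) * ((p : ℝ) + (Int.sign m : ℝ) / 4)
          - (π / ν) * ((q : ℝ) + (Int.sign m : ℝ) / 4)| := by
        have e : (π / ν) * ((p:ℝ) + (Int.sign m : ℝ)/4)
            - (π / ν) * ((q:ℝ) + (Int.sign m : ℝ)/4) = (π/ν) * ((p:ℝ) - q) := by ring
        rw [e, abs_mul, abs_of_pos (by positivity : (0:ℝ) < π/ν)]
        have h1 : (1:ℝ) ≤ |(p:ℝ) - (q:ℝ)| := by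
          have h2 : (1:ℤ) ≤ |p - q| := Int.one_le_abs (sub_ne_zero.mpr hne)
          exact_mod_cast h2
        calc π/ν = π/ν * 1 := (mul_one _).symm
        _ ≤ π/ν * |(p:ℝ) - (q:ℝ)| := mul_le_mul_of_nonneg_left h1 (by positivity)
      have htri := abs_sub_le ((π / ν) * ((p:ℝ) + (Int.sign m : ℝ)/4)) (Z q).im
        ((π / ν) * ((q:ℝ) + (Int.sign m : ℝ)/4))
      rw [abs_sub_comm] at hpim
      linarith
    have himgsub : (Finset.Icc k₁ k₂).image Z ⊆ hTfin.toFinset := by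
      intro z hz
      rw [Finset.mem_image] at hz
      obtain ⟨k, hk, rfl⟩ := hz
      rw [Finset.mem_Icc] at hk
      obtain ⟨hzS, hzF, _⟩ := hZ k hk
      rw [Set.Finite.mem_toFinset]
      refine ⟨hzS, ?_⟩
      have h1 := hdfne _ (hUsub (hSsub _ hzS)) hzF
      rw [Function.mem_support]
      exact Nat.cast_ne_zero.mpr (by omega)
    have hcard1 : ((Finset.Icc k₁ k₂).card : ℝ) ≤ ∑ z ∈ hTfin.toFinset, ((df z : ℝ)) := by
      calc ((Finset.Icc k₁ k₂).card : ℝ)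
          = (((Finset.Icc k₁ k₂).image Z).card : ℝ) := by
            rw [Finset.card_image_of_injOn hinj]
      _ = ∑ _z ∈ (Finset.Icc k₁ k₂).image Z, (1:ℝ) := by
            rw [Finset.sum_const, nsmul_eq_mul, mul_one]
      _ ≤ ∑ z ∈ (Finset.Icc k₁ k₂).image Z, ((df z : ℝ)) := by
            apply Finset.sum_le_sum
            intro z hz
            rw [Finset.mem_image] at hz
            obtain ⟨k, hk, rfl⟩ := hz
            rw [Finset.mem_Icc] at hk
            obtain ⟨hzS, hzF, _⟩ := hZ k hk
            have h1 := hdfne _ (hUsub (hSsub _ hzS)) hzF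
            exact_mod_cast h1
      _ ≤ ∑ z ∈ hTfin.toFinset, ((df z : ℝ)) :=
            Finset.sum_le_sum_of_subset_of_nonneg himgsub (fun i _ _ => by positivity)
    have hcount : ν * (π - 4 * h) / π - 2 ≤ ((Finset.Icc k₁ k₂).card : ℝ) := by
      have hBA : B' - A' = ν * (π - 4*h)/π - 1 := by
        rw [hA'_def, hB'_def]
        field_simp
        ring
      have h2 : B' - 1 < (k₂:ℝ) := by
        rw [hk₂_def]
        exact_mod_cast Int.sub_one_lt_floor B'
      have h3 : (k₁:ℝ) < A' + 1 := by
        rw [hk₁_def]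
        exact_mod_cast Int.ceil_lt_add_one A'
      rcases le_or_gt k₁ k₂ with hle | hlt
      · rw [Int.card_Icc]
        have h1' : (((k₂ + 1 - k₁).toNat : ℕ) : ℝ) = ((k₂:ℝ) + 1 - (k₁:ℝ)) := by
          have h1 : (((k₂ + 1 - k₁).toNat : ℕ) : ℤ) = (k₂ + 1 - k₁) :=
            Int.toNat_of_nonneg (by omega)
          push_cast at h1 ⊢
          exact_mod_cast h1
        rw [h1']
        linarith
      · rw [Finset.Icc_eq_empty (by omega : ¬ k₁ ≤ k₂)]
        simp only [Finset.card_empty, Nat.cast_zero]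
        have h4 : (k₂:ℝ) ≤ (k₁:ℝ) - 1 := by
          have : k₂ ≤ k₁ - 1 := by omega
          exact_mod_cast this
        linarith
    rw [hsum]
    linarith
end

section
/- Define ρ(z) = log((1 + (1 − z²)^{1/2})/z) − (1 − z²)^{1/2} for z ∈ ℂ, using the principal branches of log and the square root. Let Ω ⊂ ℂ be a compact subset of the open upper half-plane {z : Im z > 0} such that for every z ∈ Ω one has 1 − z² ∉ (−∞, 0] and (1 + (1 − z²)^{1/2})/z ∉ (−∞, 0]. Let V₀ > 0. Then there exist constants C > 0 and ν₀ > 0 such that for all real ν ≥ ν₀ and all z ∈ Ω, | ρ(z̃) − ρ(z) − V₀ (1 − z²)^{1/2} / (2 ν² z²) | ≤ C / ν⁴, where z̃ = z (1 − V₀/(ν² z²))^{1/2} with the principal square root. -/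
open Complex

/-- The phase function `ρ(z) = log((1 + (1 − z²)^{1/2})/z) − (1 − z²)^{1/2}` of the uniform
(Olver) asymptotics of Bessel functions of large order, with principal branches of the
logarithm and the square root. -/
noncomputable def olverRho (z : ℂ) : ℂ :=
  Complex.log ((1 + (1 - z ^ 2) ^ ((1 : ℂ) / 2)) / z) - (1 - z ^ 2) ^ ((1 : ℂ) / 2)

/-- The rescaled variable `z̃ = z (1 − V₀/(ν² z²))^{1/2}`, i.e. `z̃(z) = (z² − V₀/ν²)^{1/2}`,
carrying the information about the step potential of height `V₀`. -/
noncomputable def ztilde (V₀ ν : ℝ) (z : ℂ) : ℂ :=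
  z * (1 - (V₀ : ℂ) / ((ν : ℂ) ^ 2 * z ^ 2)) ^ ((1 : ℂ) / 2)

open Set

noncomputable def olvW (z w : ℂ) : ℂ := (1 - z^2 + w) ^ ((1:ℂ)/2)
noncomputable def olvZ (z w : ℂ) : ℂ := z * (1 - w/z^2) ^ ((1:ℂ)/2)
noncomputable def olvG (z w : ℂ) : ℂ := Complex.log ((1 + olvW z w)/(olvZ z w)) - olvW z w
noncomputable def olvG1 (z w : ℂ) : ℂ := olvW z w / (2*(z^2 - w))
noncomputable def olvG2 (z w : ℂ) : ℂ :=
  1/(4 * olvW z w * (z^2 - w)) + olvW z w/(2*(z^2 - w)^2)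

lemma olv_sq_half (w : ℂ) (hw : w ≠ 0) : w ^ ((1:ℂ)/2) * w ^ ((1:ℂ)/2) = w := by
  rw [← Complex.cpow_add _ _ hw]
  norm_num

lemma olv_half_ne (w : ℂ) (hw : w ≠ 0) : w ^ ((1:ℂ)/2) ≠ 0 := by
  simp [Complex.cpow_eq_zero_iff, hw]

lemma olv_hasDerivAt_sqrt (z w : ℂ) (hA : (1 - z^2 + w) ∈ Complex.slitPlane) :
    HasDerivAt (fun x => (1 - z^2 + x) ^ ((1:ℂ)/2)) (1/(2 * olvW z w)) w := by
  have h0 : HasDerivAt (fun x : ℂ => 1 - z^2 + x) 1 w := (hasDerivAt_id w).const_add (1 - z^2)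
  have h := h0.cpow_const (c := (1:ℂ)/2) hA
  convert h using 1
  rw [show ((1:ℂ)/2 - 1) = -(1/2) by norm_num, Complex.cpow_neg]
  rw [olvW]
  field_simp [olv_half_ne _ (Complex.slitPlane_ne_zero hA)]

lemma olv_hasDerivAt_Z (z w : ℂ) (hz : z ≠ 0) (hB : (1 - w/z^2) ∈ Complex.slitPlane) :
    HasDerivAt (fun x => z * (1 - x/z^2) ^ ((1:ℂ)/2)) (-(1/(2 * olvZ z w))) w := by
  have h0 : HasDerivAt (fun x : ℂ => 1 - x/z^2) (-(1/z^2)) w := by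
    simpa using ((hasDerivAt_id w).div_const (z^2)).const_sub 1
  have h := (h0.cpow_const (c := (1:ℂ)/2) hB).const_mul z
  refine h.congr_deriv ?_
  rw [show ((1:ℂ)/2 - 1) = -(1/2) by norm_num, Complex.cpow_neg]
  rw [olvZ]
  have hb := olv_half_ne _ (Complex.slitPlane_ne_zero hB)
  set b := (1 - w/z^2) ^ ((1:ℂ)/2) with hbdef
  field_simp

lemma olv_alg (a u z w : ℂ) (ha : a ≠ 0) (hu : u ≠ 0) (hN : 1 + a ≠ 0)
    (ha2 : a*a = 1 - z^2 + w) (hu2 : u*u = z^2 - w) :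
    (1/(2*a) * u - (1+a) * (-(1/(2*u)))) / u^2 / ((1+a)/u) - 1/(2*a)
      = a/(2*(z^2 - w)) := by
  have huu : u*u = 1 - a*a := by linear_combination hu2 + ha2
  have hD : (4:ℂ)*u^3*a*(1+a) ≠ 0 :=
    mul_ne_zero (mul_ne_zero (mul_ne_zero (by norm_num : (4:ℂ) ≠ 0) (pow_ne_zero 3 hu)) ha) hN
  have hD' : u ^ 3 * a * 4 + u ^ 3 * a ^ 2 * 4 ≠ 0 := by
    intro h; exact hD (by linear_combination h)
  rw [← hu2]
  field_simp
  ring_nf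
  field_simp [hD']
  ring_nf
  linear_combination (-1:ℂ) * huu

lemma olv_hasDerivAt_G1 (z w : ℂ) (hA : (1 - z^2 + w) ∈ Complex.slitPlane)
    (hzs : z^2 - w ≠ 0) :
    HasDerivAt (fun x => olvG1 z x) (olvG2 z w) w := by
  have ha := olv_hasDerivAt_sqrt z w hA
  have hden : HasDerivAt (fun x : ℂ => 2*(z^2 - x)) (-2) w := by
    simpa using ((hasDerivAt_id w).const_sub (z^2)).const_mul 2
  have h2ne : (2:ℂ)*(z^2 - w) ≠ 0 := by simp [hzs]
  have h := ha.div hden h2ne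
  refine h.congr_deriv ?_
  simp only [olvG2, olvW]
  set a := (1 - z^2 + w) ^ ((1:ℂ)/2) with hadef
  have haw : a ≠ 0 := olv_half_ne _ (Complex.slitPlane_ne_zero hA)
  field_simp [haw, hzs]
  ring

lemma olv_hasDerivAt_G (z w : ℂ) (hz : z ≠ 0)
    (hA : (1 - z^2 + w) ∈ Complex.slitPlane) (hB : (1 - w/z^2) ∈ Complex.slitPlane)
    (hzs : z^2 - w ≠ 0)
    (hq : (1 + olvW z w)/(olvZ z w) ∈ Complex.slitPlane) :
    HasDerivAt (fun x => olvG z x) (olvG1 z w) w := by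
  have hAne := Complex.slitPlane_ne_zero hA
  have hBne := Complex.slitPlane_ne_zero hB
  have ha := olv_hasDerivAt_sqrt z w hA
  have hZd := olv_hasDerivAt_Z z w hz hB
  have haw : olvW z w ≠ 0 := olv_half_ne _ hAne
  have hZne : olvZ z w ≠ 0 := mul_ne_zero hz (olv_half_ne _ hBne)
  have ha2 : olvW z w * olvW z w = 1 - z^2 + w := olv_sq_half _ hAne
  have hZ2 : olvZ z w * olvZ z w = z^2 - w := by
    have hb2 : ((1 - w/z^2) ^ ((1:ℂ)/2)) * ((1 - w/z^2) ^ ((1:ℂ)/2)) = 1 - w/z^2 :=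
      olv_sq_half _ hBne
    simp only [olvZ]
    rw [show z * (1 - w/z^2) ^ ((1:ℂ)/2) * (z * (1 - w/z^2) ^ ((1:ℂ)/2))
        = z^2 * ((1 - w/z^2) ^ ((1:ℂ)/2) * ((1 - w/z^2) ^ ((1:ℂ)/2))) from by ring, hb2]
    field_simp
  have hNne : 1 + olvW z w ≠ 0 := by
    intro h
    have h1 : olvW z w = -1 := by linear_combination h
    rw [h1] at ha2
    exact hzs (by linear_combination ha2)
  have hN : HasDerivAt (fun x : ℂ => 1 + (1 - z^2 + x) ^ ((1:ℂ)/2)) (1/(2 * olvW z w)) w :=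
    ha.const_add 1
  have hQ := hN.div hZd hZne
  have hlog := hQ.clog hq
  have hfinal := hlog.sub ha
  refine hfinal.congr_deriv ?_
  simp only [Pi.div_apply]
  rw [show z * ((1:ℂ) - w / z ^ 2) ^ ((1:ℂ)/2) = olvZ z w from rfl,
    show ((1:ℂ) - z ^ 2 + w) ^ ((1:ℂ)/2) = olvW z w from rfl, olvG1]
  exact (olv_alg (olvW z w) (olvZ z w) z w haw hZne hNne ha2 hZ2)

lemma olv_memA (z : ℂ) (h : (1 - z^2) ∈ Complex.slitPlane) (s : ℝ) (hs : 0 ≤ s) :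
    (1 - z^2 + (s:ℂ)) ∈ Complex.slitPlane := by
  rw [Complex.mem_slitPlane_iff] at h ⊢
  rcases h with h | h
  · left; simp only [Complex.add_re, Complex.ofReal_re]; linarith
  · right; simpa using h

lemma olv_zsq_ne (z : ℂ) (hz : 0 < z.im) (s : ℝ) (hs : 0 ≤ s) : z^2 - (s:ℂ) ≠ 0 := by
  intro h
  rw [sub_eq_zero] at h
  have him : (z^2).im = 0 := by rw [h]; simp
  have hre : (z^2).re = s := by rw [h]; simp
  rw [pow_two, Complex.mul_im] at him
  rw [pow_two, Complex.mul_re] at hre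
  have hzre : z.re = 0 := by nlinarith
  nlinarith

lemma olv_memB (z : ℂ) (hz : 0 < z.im) (s : ℝ) (hs : 0 ≤ s) :
    (1 - (s:ℂ)/z^2) ∈ Complex.slitPlane := by
  have hz0 : z ≠ 0 := fun h => by simp [h] at hz
  have hsq : z^2 ≠ 0 := pow_ne_zero 2 hz0
  have hn : 0 < Complex.normSq (z^2) := Complex.normSq_pos.2 hsq
  rw [Complex.mem_slitPlane_iff]
  rcases eq_or_lt_of_le hs with hs0 | hs0
  · left; simp [← hs0]
  rcases eq_or_ne z.re 0 with hre | hre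
  · left
    have him2 : (z^2).im = 0 := by rw [pow_two, Complex.mul_im, hre]; ring
    have hre2 : (z^2).re = -(z.im^2) := by rw [pow_two, Complex.mul_re, hre]; ring
    simp only [Complex.sub_re, Complex.one_re, Complex.div_re, Complex.ofReal_re,
      Complex.ofReal_im, him2, hre2]
    have : Complex.normSq (z^2) = (z.im^2)^2 := by
      rw [Complex.normSq_apply, him2, hre2]; ring
    rw [this]
    have h1 : s * -(z.im^2) / (z.im^2)^2 ≤ 0 := by
      apply div_nonpos_of_nonpos_of_nonneg
      · nlinarith
      · positivity
    simp only [zero_mul, zero_div, add_zero]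
    linarith
  · right
    have him2 : (z^2).im ≠ 0 := by
      rw [pow_two, Complex.mul_im]
      intro h; apply hre; nlinarith
    simp only [Complex.sub_im, Complex.one_im, Complex.div_im, Complex.ofReal_re,
      Complex.ofReal_im]
    intro h
    have : s * (z^2).im / Complex.normSq (z^2) = 0 := by
      rw [zero_mul, zero_div] at h; linarith [h]
    have := (div_eq_zero_iff.1 this)
    rcases this with h' | h'
    · rcases mul_eq_zero.1 h' with h'' | h''
      · exact absurd h'' (ne_of_gt hs0)
      · exact him2 h''
    · exact absurd h' (ne_of_gt hn)

lemma olv_rho_eq (z : ℂ) (hz : z ≠ 0) (w : ℂ) (hB : (1 - w/z^2) ≠ 0) :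
    olverRho (z * (1 - w/z^2) ^ ((1:ℂ)/2)) = olvG z w := by
  have hb2 := olv_sq_half _ hB
  have key : 1 - (z * (1 - w/z^2) ^ ((1:ℂ)/2))^2 = 1 - z^2 + w := by
    rw [show (z * (1 - w/z^2) ^ ((1:ℂ)/2))^2
        = z^2 * ((1 - w/z^2) ^ ((1:ℂ)/2) * ((1 - w/z^2) ^ ((1:ℂ)/2))) from by ring, hb2]
    field_simp
    ring
  rw [olverRho, olvG, olvW, olvZ, key]

/-- Let `Ω` be a compact subset of the open upper half-plane such that for
every `z ∈ Ω`, `1 − z² ∉ (−∞, 0]` and `(1 + (1 − z²)^{1/2})/z ∉ (−∞, 0]`. Let `V₀ > 0`.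
Then there are `C > 0` and `ν₀ > 0` such that for all real `ν ≥ ν₀` and all `z ∈ Ω`,
`|ρ(z̃) − ρ(z) − V₀ (1 − z²)^{1/2}/(2 ν² z²)| ≤ C/ν⁴`. -/
theorem stmt8 (V₀ : ℝ) (hV₀ : 0 < V₀) (Ω : Set ℂ) (hΩc : IsCompact Ω)
    (hΩup : ∀ z ∈ Ω, 0 < z.im)
    (h1 : ∀ z ∈ Ω, (1 - z ^ 2) ∈ Complex.slitPlane)
    (h2 : ∀ z ∈ Ω, (1 + (1 - z ^ 2) ^ ((1 : ℂ) / 2)) / z ∈ Complex.slitPlane) :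
    ∃ C > 0, ∃ ν₀ > 0, ∀ ν : ℝ, ν₀ ≤ ν → ∀ z ∈ Ω,
      ‖olverRho (ztilde V₀ ν z) - olverRho z
            - (V₀ : ℂ) * (1 - z ^ 2) ^ ((1 : ℂ) / 2) / (2 * (ν : ℂ) ^ 2 * z ^ 2)‖
        ≤ C / ν ^ 4 := by
  rcases Ω.eq_empty_or_nonempty with hΩe | hne
  · exact ⟨1, one_pos, 1, one_pos, fun ν _ z hz => by
      rw [hΩe] at hz; exact absurd hz (Set.notMem_empty z)⟩
  have hz0 : ∀ z ∈ Ω, z ≠ 0 := fun z hz h => by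
    have := hΩup z hz; rw [h] at this; simp at this
  set K : Set (ℂ × ℝ) := Ω ×ˢ Icc (0:ℝ) 1 with hKdef
  have hKc : IsCompact K := hΩc.prod isCompact_Icc
  have hKmem : ∀ p : ℂ × ℝ, p ∈ K → p.1 ∈ Ω ∧ 0 ≤ p.2 ∧ p.2 ≤ 1 := by
    intro p hp
    rw [hKdef, Set.mem_prod] at hp
    exact ⟨hp.1, hp.2.1, hp.2.2⟩
  -- continuity of W on K
  have hWc : ContinuousOn (fun p : ℂ × ℝ => olvW p.1 (p.2:ℂ)) K := by
    intro p hp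
    obtain ⟨hp1, hp2, _⟩ := hKmem p hp
    have hbase : Continuous (fun p : ℂ × ℝ => 1 - p.1^2 + (p.2:ℂ)) :=
      (continuous_const.sub (continuous_fst.pow 2)).add
        (Complex.continuous_ofReal.comp continuous_snd)
    have hA : (1 - p.1^2 + (p.2:ℂ)) ∈ Complex.slitPlane := olv_memA p.1 (h1 _ hp1) p.2 hp2
    exact (hbase.continuousAt.cpow continuousAt_const hA).continuousWithinAt
  -- continuity of Z on K, and nonvanishing
  have hZne : ∀ p : ℂ × ℝ, p ∈ K → olvZ p.1 (p.2:ℂ) ≠ 0 := by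
    intro p hp
    obtain ⟨hp1, hp2, _⟩ := hKmem p hp
    exact mul_ne_zero (hz0 _ hp1)
      (olv_half_ne _ (Complex.slitPlane_ne_zero (olv_memB p.1 (hΩup _ hp1) p.2 hp2)))
  have hZc : ContinuousOn (fun p : ℂ × ℝ => olvZ p.1 (p.2:ℂ)) K := by
    have hZb : ContinuousOn (fun p : ℂ × ℝ => 1 - (p.2:ℂ)/p.1^2) K := by
      apply ContinuousOn.sub continuousOn_const
      apply ContinuousOn.div
      · exact Continuous.continuousOn (Complex.continuous_ofReal.comp continuous_snd)
      · exact Continuous.continuousOn (continuous_fst.pow 2)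
      · intro p hp; exact pow_ne_zero 2 (hz0 _ (hKmem p hp).1)
    simp only [olvZ]
    apply ContinuousOn.mul (Continuous.continuousOn continuous_fst)
    intro p hp
    obtain ⟨hp1, hp2, _⟩ := hKmem p hp
    exact (hZb p hp).cpow continuousWithinAt_const (olv_memB p.1 (hΩup _ hp1) p.2 hp2)
  -- the function Φ
  set Φ : ℂ × ℝ → ℂ := fun p => (1 + olvW p.1 (p.2:ℂ))/(olvZ p.1 (p.2:ℂ)) with hΦdef
  have hΦc : ContinuousOn Φ K := (continuousOn_const.add hWc).div hZc hZne
  -- continuity of G2 on K, bound M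
  have hWne : ∀ p : ℂ × ℝ, p ∈ K → olvW p.1 (p.2:ℂ) ≠ 0 := by
    intro p hp
    obtain ⟨hp1, hp2, _⟩ := hKmem p hp
    exact olv_half_ne _ (Complex.slitPlane_ne_zero (olv_memA p.1 (h1 _ hp1) p.2 hp2))
  have hzsne : ∀ p : ℂ × ℝ, p ∈ K → p.1^2 - (p.2:ℂ) ≠ 0 := by
    intro p hp
    obtain ⟨hp1, hp2, _⟩ := hKmem p hp
    exact olv_zsq_ne p.1 (hΩup _ hp1) p.2 hp2
  have hF2c : ContinuousOn (fun p : ℂ × ℝ => olvG2 p.1 (p.2:ℂ)) K := by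
    simp only [olvG2]
    have hzs : ContinuousOn (fun p : ℂ × ℝ => p.1^2 - (p.2:ℂ)) K :=
      Continuous.continuousOn ((continuous_fst.pow 2).sub
        (Complex.continuous_ofReal.comp continuous_snd))
    apply ContinuousOn.add
    · apply ContinuousOn.div continuousOn_const
      · exact (continuousOn_const.mul hWc).mul hzs
      · intro p hp
        exact mul_ne_zero (mul_ne_zero (by norm_num) (hWne p hp)) (hzsne p hp)
    · apply ContinuousOn.div hWc
      · exact continuousOn_const.mul (hzs.pow 2)
      · intro p hp
        exact mul_ne_zero (by norm_num) (pow_ne_zero 2 (hzsne p hp))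
  obtain ⟨M, hM⟩ := hKc.exists_bound_of_continuousOn hF2c
  set M' : ℝ := max M 1 with hM'def
  have hM'pos : (0:ℝ) < M' := lt_of_lt_of_le one_pos (le_max_right _ _)
  -- Φ(z,0) ∈ slitPlane
  have hΦ0 : ∀ z ∈ Ω, Φ (z, 0) ∈ Complex.slitPlane := by
    intro z hz
    have he : Φ (z, 0) = (1 + (1 - z^2) ^ ((1:ℂ)/2))/z := by
      simp [hΦdef, olvW, olvZ]
    rw [he]; exact h2 z hz
  have hcls : IsClosed (Complex.slitPlaneᶜ : Set ℂ) := Complex.isOpen_slitPlane.isClosed_compl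
  have hclne : (Complex.slitPlaneᶜ : Set ℂ).Nonempty :=
    ⟨0, by simp [Complex.mem_slitPlane_iff]⟩
  set ψ : ℂ → ℝ := fun z => Metric.infDist (Φ (z, 0)) (Complex.slitPlaneᶜ) with hψdef
  have hmapsto : ∀ z ∈ Ω, ((z, (0:ℝ)) : ℂ × ℝ) ∈ K := by
    intro z hz
    rw [hKdef, Set.mem_prod]
    exact ⟨hz, by norm_num, by norm_num⟩
  have hψc : ContinuousOn ψ Ω := by
    apply (Metric.continuous_infDist_pt _).comp_continuousOn
    exact hΦc.comp (Continuous.continuousOn (continuous_id.prodMk continuous_const)) hmapsto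
  obtain ⟨z₀, hz₀Ω, hz₀min⟩ := hΩc.exists_isMinOn hne hψc
  have hε : 0 < ψ z₀ := by
    rw [← hcls.notMem_iff_infDist_pos hclne]
    simpa using hΦ0 z₀ hz₀Ω
  -- uniform continuity
  have hUC := hKc.uniformContinuousOn_of_continuous hΦc
  rw [Metric.uniformContinuousOn_iff] at hUC
  obtain ⟨δ, hδ0, hδ⟩ := hUC (ψ z₀) hε
  set r : ℝ := min (δ/2) 1 with hrdef
  have hr0 : 0 < r := lt_min (by linarith) one_pos
  have hr1 : r ≤ 1 := min_le_right _ _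
  have hslit : ∀ z ∈ Ω, ∀ u : ℝ, 0 ≤ u → u ≤ r → Φ (z, u) ∈ Complex.slitPlane := by
    intro z hz u hu0 hur
    by_contra hcon
    have h1d : ((z,u) : ℂ × ℝ) ∈ K := by
      rw [hKdef, Set.mem_prod]; exact ⟨hz, hu0, le_trans hur hr1⟩
    have h2d : ((z,(0:ℝ)) : ℂ × ℝ) ∈ K := hmapsto z hz
    have hd : dist ((z,(0:ℝ)) : ℂ × ℝ) ((z,u) : ℂ × ℝ) < δ := by
      rw [Prod.dist_eq]
      simp only [dist_self, Real.dist_eq]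
      have : |(0:ℝ) - u| = u := by rw [abs_of_nonpos (by linarith)]; ring
      rw [this]
      have : u ≤ δ/2 := le_trans hur (min_le_left _ _)
      have hmax : max (0:ℝ) u = u := max_eq_right hu0
      rw [hmax]; linarith
    have hlt := hδ _ h2d _ h1d hd
    have hle : ψ z₀ ≤ dist (Φ (z,(0:ℝ))) (Φ (z,u)) :=
      le_trans (hz₀min (hz : z ∈ Ω)) (Metric.infDist_le_dist_of_mem hcon)
    linarith
  -- choose constants
  refine ⟨M' * V₀^2, by positivity, max 1 (Real.sqrt (V₀/r)),
    lt_of_lt_of_le one_pos (le_max_left _ _), ?_⟩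
  intro ν hν z hz
  have hν1 : (1:ℝ) ≤ ν := le_trans (le_max_left _ _) hν
  have hν0 : (0:ℝ) < ν := by linarith
  have hνne : (ν:ℂ) ≠ 0 := Complex.ofReal_ne_zero.2 (ne_of_gt hν0)
  have hzne : z ≠ 0 := hz0 z hz
  have hzim : 0 < z.im := hΩup z hz
  set t : ℝ := V₀ / ν^2 with htdef
  have ht0 : 0 < t := by positivity
  have htr : t ≤ r := by
    have h₁ : Real.sqrt (V₀/r) ≤ ν := le_trans (le_max_right _ _) hν
    have h₂ : V₀/r ≤ ν^2 := by
      have := pow_le_pow_left₀ (Real.sqrt_nonneg (V₀/r)) h₁ 2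
      rwa [Real.sq_sqrt (by positivity)] at this
    rw [htdef, div_le_iff₀ (by positivity : (0:ℝ) < ν^2)]
    have := (div_le_iff₀ hr0).1 h₂
    linarith
  have hsub : Icc (0:ℝ) t ⊆ Icc (0:ℝ) 1 := Icc_subset_Icc le_rfl (le_trans htr hr1)
  -- derivatives
  have hder : ∀ u ∈ Icc (0:ℝ) t, HasDerivWithinAt (fun s : ℝ => olvG z ((s:ℝ):ℂ))
      (olvG1 z ((u:ℝ):ℂ)) (Icc (0:ℝ) t) u := by
    intro u hu
    have h0u : 0 ≤ u := hu.1
    have hq : (1 + olvW z (u:ℂ))/(olvZ z (u:ℂ)) ∈ Complex.slitPlane :=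
      hslit z hz u h0u (le_trans hu.2 htr)
    exact ((olv_hasDerivAt_G z (u:ℂ) hzne (olv_memA z (h1 z hz) u h0u)
      (olv_memB z hzim u h0u) (olv_zsq_ne z hzim u h0u) hq).comp_ofReal).hasDerivWithinAt
  have hder1 : ∀ u ∈ Icc (0:ℝ) t, HasDerivWithinAt (fun s : ℝ => olvG1 z ((s:ℝ):ℂ))
      (olvG2 z ((u:ℝ):ℂ)) (Icc (0:ℝ) t) u := by
    intro u hu
    have h0u : 0 ≤ u := hu.1
    exact ((olv_hasDerivAt_G1 z (u:ℂ) (olv_memA z (h1 z hz) u h0u)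
      (olv_zsq_ne z hzim u h0u)).comp_ofReal).hasDerivWithinAt
  have hbound : ∀ u ∈ Icc (0:ℝ) t, ‖olvG2 z ((u:ℝ):ℂ)‖ ≤ M' := by
    intro u hu
    have hmem : ((z,u) : ℂ × ℝ) ∈ K := by
      rw [hKdef, Set.mem_prod]; exact ⟨hz, hsub hu⟩
    exact le_trans (hM (z,u) hmem) (le_max_left _ _)
  have stage1 : ∀ u ∈ Icc (0:ℝ) t, ‖olvG1 z ((u:ℝ):ℂ) - olvG1 z (((0:ℝ)):ℂ)‖ ≤ M' * t := by
    intro u hu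
    have := norm_image_sub_le_of_norm_deriv_le_segment' hder1
      (fun x hx => hbound x (Ico_subset_Icc_self hx)) u hu
    calc ‖olvG1 z ((u:ℝ):ℂ) - olvG1 z (((0:ℝ)):ℂ)‖ ≤ M' * (u - 0) := this
      _ ≤ M' * t := by
          apply mul_le_mul_of_nonneg_left _ (le_of_lt hM'pos)
          simpa using hu.2
  set c : ℂ := olvG1 z (((0:ℝ)):ℂ) with hcdef
  have hder2 : ∀ u ∈ Icc (0:ℝ) t, HasDerivWithinAt
      (fun s : ℝ => olvG z ((s:ℝ):ℂ) - s • c) (olvG1 z ((u:ℝ):ℂ) - c) (Icc (0:ℝ) t) u := by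
    intro u hu
    have h' := (hder u hu).sub (((hasDerivAt_id u).smul_const c).hasDerivWithinAt
      (s := Icc (0:ℝ) t))
    exact h'.congr_deriv (by simp)
  have stage2 := norm_image_sub_le_of_norm_deriv_le_segment' hder2
    (fun x hx => stage1 x (Ico_subset_Icc_self hx)) t (right_mem_Icc.2 (le_of_lt ht0))
  -- rewriting the target
  have e1 : ztilde V₀ ν z = z * (1 - ((t:ℝ):ℂ)/z^2) ^ ((1:ℂ)/2) := by
    rw [ztilde, htdef]
    rw [Complex.ofReal_div, Complex.ofReal_pow, div_div]
  have e2 : olverRho (ztilde V₀ ν z) = olvG z ((t:ℝ):ℂ) := by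
    rw [e1]
    exact olv_rho_eq z hzne _ (Complex.slitPlane_ne_zero (olv_memB z hzim t ht0.le))
  have e3 : olverRho z = olvG z (((0:ℝ)):ℂ) := by
    have h0 : ((1:ℂ) - 0/z^2) = 1 := by simp
    have := olv_rho_eq z hzne 0 (by rw [h0]; norm_num)
    rw [h0] at this
    simpa using this
  have e4 : (V₀:ℂ) * (1 - z^2) ^ ((1:ℂ)/2) / (2 * (ν:ℂ)^2 * z^2) = ((t:ℝ):ℂ) * c := by
    have hz2 : z^2 ≠ 0 := pow_ne_zero 2 hzne
    have ht' : ((t:ℝ):ℂ) = (V₀:ℂ)/(ν:ℂ)^2 := by rw [htdef]; push_cast; ring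
    rw [hcdef, olvG1, olvW, ht', Complex.ofReal_zero, add_zero, sub_zero]
    field_simp
  have key : olverRho (ztilde V₀ ν z) - olverRho z
      - (V₀:ℂ) * (1 - z^2) ^ ((1:ℂ)/2) / (2 * (ν:ℂ)^2 * z^2)
      = (olvG z ((t:ℝ):ℂ) - t • c) - (olvG z (((0:ℝ)):ℂ) - (0:ℝ) • c) := by
    rw [e2, e3, e4, Complex.real_smul, Complex.real_smul]
    push_cast
    ring
  rw [key]
  calc ‖(olvG z ((t:ℝ):ℂ) - t • c) - (olvG z (((0:ℝ)):ℂ) - (0:ℝ) • c)‖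
      ≤ M' * t * (t - 0) := stage2
    _ = M' * V₀^2 / ν^4 := by rw [htdef]; field_simp; ring
    _ ≤ M' * V₀^2 / ν^4 := le_refl _
end

section
/- Define ρ(z) = log((1 + (1 − z²)^{1/2})/z) − (1 − z²)^{1/2} for z ∈ ℂ, using the principal branches of log and the square root. Let Ω ⊂ ℂ be a compact subset of the open upper half-plane {z : Im z > 0} such that for every z ∈ Ω one has 1 − z² ∉ (−∞, 0] and (1 + (1 − z²)^{1/2})/z ∉ (−∞, 0]. Let V₀ > 0. Then there exist constants C > 0 and ν₀ > 0 such that for all real ν ≥ ν₀ and all z ∈ Ω, | e^{−ν(ρ(z̃) − ρ(z))} − 1 + V₀ (1 − z²)^{1/2} / (2 ν z²) − V₀² (1 − z²) / (8 ν² z⁴) | ≤ C / ν³, where z̃ = z (1 − V₀/(ν² z²))^{1/2} with the principal square root. -/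
open Complex

open Metric

def olverGood : Set ℂ :=
  {w | w ≠ 0 ∧ (1 - w ^ 2) ∈ Complex.slitPlane ∧
    (1 + (1 - w ^ 2) ^ ((1 : ℂ) / 2)) / w ∈ Complex.slitPlane}

lemma sq_half_mul {a : ℂ} (ha : a ∈ Complex.slitPlane) :
    a ^ ((1 : ℂ) / 2) * a ^ ((1 : ℂ) / 2) = a := by
  rw [← Complex.cpow_add _ _ (Complex.slitPlane_ne_zero ha)]
  norm_num

lemma half_ne_zero' {a : ℂ} (ha : a ∈ Complex.slitPlane) : a ^ ((1 : ℂ) / 2) ≠ 0 := by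
  intro h
  have := sq_half_mul ha
  rw [h, mul_zero] at this
  exact Complex.slitPlane_ne_zero ha this.symm

lemma isOpen_olverGood : IsOpen olverGood := by
  rw [isOpen_iff_mem_nhds]
  rintro w ⟨hw0, hw1, hw2⟩
  have hc1 : ContinuousAt (fun w : ℂ => 1 - w ^ 2) w := by fun_prop
  have hc2 : ContinuousAt (fun w : ℂ => (1 - w ^ 2) ^ ((1 : ℂ) / 2)) w :=
    hc1.cpow continuousAt_const hw1
  have hc3 : ContinuousAt (fun w : ℂ => (1 + (1 - w ^ 2) ^ ((1 : ℂ) / 2)) / w) w :=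
    (continuousAt_const.add hc2).div continuousAt_id hw0
  have e0 : ∀ᶠ x in nhds w, x ≠ 0 := continuousAt_id.eventually_ne hw0
  have e1 : ∀ᶠ x in nhds w, (1 - x ^ 2) ∈ Complex.slitPlane :=
    hc1.eventually_mem (Complex.isOpen_slitPlane.mem_nhds hw1)
  have e2 : ∀ᶠ x in nhds w,
      (1 + (1 - x ^ 2) ^ ((1 : ℂ) / 2)) / x ∈ Complex.slitPlane :=
    hc3.eventually_mem (Complex.isOpen_slitPlane.mem_nhds hw2)
  filter_upwards [e0, e1, e2] with x h0 h1 h2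
  exact ⟨h0, h1, h2⟩

lemma olverRho_continuousAt {w : ℂ} (hw : w ∈ olverGood) : ContinuousAt olverRho w := by
  obtain ⟨hw0, hw1, hw2⟩ := hw
  have hc1 : ContinuousAt (fun w : ℂ => 1 - w ^ 2) w := by fun_prop
  have hc2 : ContinuousAt (fun w : ℂ => (1 - w ^ 2) ^ ((1 : ℂ) / 2)) w :=
    hc1.cpow continuousAt_const hw1
  have hc3 : ContinuousAt (fun w : ℂ => (1 + (1 - w ^ 2) ^ ((1 : ℂ) / 2)) / w) w :=
    (continuousAt_const.add hc2).div continuousAt_id hw0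
  exact (hc3.clog hw2).sub hc2

lemma olverRho_hasDerivAt {w : ℂ} (hw : w ∈ olverGood) :
    HasDerivAt olverRho (-(1 - w ^ 2) ^ ((1 : ℂ) / 2) / w) w := by
  obtain ⟨hw0, hw1, hw2⟩ := hw
  set q := (1 - w ^ 2) ^ ((1 : ℂ) / 2) with hq
  have hq2 : q * q = 1 - w ^ 2 := sq_half_mul hw1
  have hqne : q ≠ 0 := half_ne_zero' hw1
  have h1q : 1 + q ≠ 0 := by
    intro h
    apply Complex.slitPlane_ne_zero hw2
    rw [h, zero_div]
  have hin : HasDerivAt (fun w : ℂ => 1 - w ^ 2) (-(2 * w)) w := by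
    simpa using ((hasDerivAt_pow 2 w).const_sub 1)
  have hsq0 : HasDerivAt (fun w : ℂ => (1 - w ^ 2) ^ ((1 : ℂ) / 2))
      ((1 / 2) * (1 - w ^ 2) ^ ((1 : ℂ) / 2 - 1) * (-(2 * w))) w :=
    hin.cpow_const hw1
  have hpow : (1 - w ^ 2) ^ ((1 : ℂ) / 2 - 1) = q / (1 - w ^ 2) := by
    have h12 : ((1 : ℂ) / 2 - 1) = (1 : ℂ) / 2 + (-1) := by ring
    rw [h12, Complex.cpow_add _ _ (Complex.slitPlane_ne_zero hw1),
      Complex.cpow_neg, Complex.cpow_one]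
    norm_num [hq, div_eq_mul_inv]
  rw [hpow] at hsq0
  have hqd : (1 / 2 : ℂ) * (q / (1 - w ^ 2)) * (-(2 * w)) = -w / q := by
    rw [← hq2]; field_simp
  rw [hqd] at hsq0
  have hgq : HasDerivAt (fun w : ℂ => (1 + (1 - w ^ 2) ^ ((1 : ℂ) / 2)) / w)
      ((-w / q * w - (1 + q)) / w ^ 2) w := by
    have h := ((hasDerivAt_const w (1 : ℂ)).add hsq0).div (hasDerivAt_id w) hw0
    simp only [id_eq, zero_add, mul_one] at h
    exact h
  have hlog : HasDerivAt (fun w : ℂ => Complex.log ((1 + (1 - w ^ 2) ^ ((1 : ℂ) / 2)) / w))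
      (((-w / q * w - (1 + q)) / w ^ 2) / ((1 + q) / w)) w :=
    hgq.clog hw2
  have htot := hlog.sub hsq0
  have hval : ((-w / q * w - (1 + q)) / w ^ 2) / ((1 + q) / w) - -w / q = -q / w := by
    rw [div_div_div_comm]
    field_simp
    ring_nf
    linear_combination q * hq2
  rw [hval] at htot
  exact htot

noncomputable def ztF (z s : ℂ) : ℂ := z * (1 - s / z ^ 2) ^ ((1 : ℂ) / 2)

noncomputable def FF (z s : ℂ) : ℂ := olverRho (ztF z s) - olverRho z

def UU : Set (ℂ × ℂ) :=
  {p | p.1 ∈ olverGood ∧ (1 - p.2 / p.1 ^ 2) ∈ Complex.slitPlane ∧ ztF p.1 p.2 ∈ olverGood}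

lemma ztF_zero {z : ℂ} : ztF z 0 = z := by
  simp [ztF, Complex.one_cpow]

lemma FF_zero {z : ℂ} : FF z 0 = 0 := by
  simp [FF, ztF_zero]

lemma mem_UU_zero {z : ℂ} (hz : z ∈ olverGood) : (z, (0 : ℂ)) ∈ UU := by
  refine ⟨hz, by simpa using Complex.one_mem_slitPlane, ?_⟩
  simpa [ztF_zero] using hz

lemma continuousAt_ztF {p : ℂ × ℂ} (h0 : p.1 ≠ 0)
    (h1 : (1 - p.2 / p.1 ^ 2) ∈ Complex.slitPlane) :
    ContinuousAt (fun p : ℂ × ℂ => ztF p.1 p.2) p := by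
  have hin : ContinuousAt (fun p : ℂ × ℂ => 1 - p.2 / p.1 ^ 2) p := by
    have : ContinuousAt (fun p : ℂ × ℂ => p.1 ^ 2) p := by fun_prop
    exact continuousAt_const.sub (continuous_snd.continuousAt.div this (by simpa using pow_ne_zero 2 h0))
  exact continuous_fst.continuousAt.mul (hin.cpow continuousAt_const h1)

lemma isOpen_UU : IsOpen UU := by
  rw [isOpen_iff_mem_nhds]
  rintro p ⟨hp1, hp2, hp3⟩
  have h0 : p.1 ≠ 0 := hp1.1
  have hin : ContinuousAt (fun p : ℂ × ℂ => 1 - p.2 / p.1 ^ 2) p := by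
    have : ContinuousAt (fun p : ℂ × ℂ => p.1 ^ 2) p := by fun_prop
    exact continuousAt_const.sub (continuous_snd.continuousAt.div this (by simpa using pow_ne_zero 2 h0))
  have hzt := continuousAt_ztF h0 hp2
  have e1 : ∀ᶠ x in nhds p, x.1 ∈ olverGood :=
    continuous_fst.continuousAt.eventually_mem (isOpen_olverGood.mem_nhds hp1)
  have e2 : ∀ᶠ x in nhds p, (1 - x.2 / x.1 ^ 2) ∈ Complex.slitPlane :=
    hin.eventually_mem (Complex.isOpen_slitPlane.mem_nhds hp2)
  have e3 : ∀ᶠ x in nhds p, ztF x.1 x.2 ∈ olverGood :=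
    hzt.eventually_mem (isOpen_olverGood.mem_nhds hp3)
  filter_upwards [e1, e2, e3] with x h1 h2 h3
  exact ⟨h1, h2, h3⟩

lemma continuousAt_FF {p : ℂ × ℂ} (hp : p ∈ UU) :
    ContinuousAt (fun p : ℂ × ℂ => FF p.1 p.2) p := by
  obtain ⟨hp1, hp2, hp3⟩ := hp
  exact (ContinuousAt.comp (f := fun p : ℂ × ℂ => ztF p.1 p.2) (olverRho_continuousAt hp3)
      (continuousAt_ztF hp1.1 hp2)).sub
    (ContinuousAt.comp (f := fun p : ℂ × ℂ => p.1) (olverRho_continuousAt hp1)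
      continuous_fst.continuousAt)

lemma hasDerivAt_ztF_s {z s : ℂ} (h : (z, s) ∈ UU) :
    HasDerivAt (fun s => ztF z s)
      (z * ((1 / 2) * (1 - s / z ^ 2) ^ ((1 : ℂ) / 2 - 1) * (-(z ^ 2)⁻¹))) s := by
  have hin : HasDerivAt (fun s : ℂ => 1 - s / z ^ 2) (-(z ^ 2)⁻¹) s := by
    simpa [div_eq_mul_inv] using (((hasDerivAt_id s).div_const (z ^ 2)).const_sub 1)
  exact (hin.cpow_const h.2.1).const_mul z

lemma differentiableAt_FF_s {z s : ℂ} (h : (z, s) ∈ UU) :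
    DifferentiableAt ℂ (FF z) s := by
  have hzt := hasDerivAt_ztF_s h
  have hrho := olverRho_hasDerivAt h.2.2
  exact ((hrho.comp s hzt).sub_const (olverRho z)).differentiableAt

lemma FF_hasDerivAt_zero {z : ℂ} (hz : z ∈ olverGood) :
    HasDerivAt (FF z) ((1 - z ^ 2) ^ ((1 : ℂ) / 2) / (2 * z ^ 2)) 0 := by
  have hmem := mem_UU_zero hz
  have hzt := hasDerivAt_ztF_s hmem
  have hrho := olverRho_hasDerivAt hz
  rw [← ztF_zero (z := z)] at hrho
  have h := (hrho.comp 0 hzt).sub_const (olverRho z)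
  have hval : -(1 - (ztF z 0) ^ 2) ^ ((1 : ℂ) / 2) / (ztF z 0) *
      (z * ((1 / 2) * (1 - 0 / z ^ 2) ^ ((1 : ℂ) / 2 - 1) * (-(z ^ 2)⁻¹)))
      = (1 - z ^ 2) ^ ((1 : ℂ) / 2) / (2 * z ^ 2) := by
    rw [ztF_zero]
    have hz0 : z ≠ 0 := hz.1
    simp only [zero_div, sub_zero, Complex.one_cpow]
    field_simp
  rw [hval] at h
  exact h

lemma exists_tube (Ω : Set ℂ) (hΩc : IsCompact Ω) (hΩg : ∀ z ∈ Ω, z ∈ olverGood) :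
    ∃ r > 0, ∀ z ∈ Ω, ∀ s : ℂ, ‖s‖ ≤ r → (z, s) ∈ UU := by
  have hsub : Ω ×ˢ ({0} : Set ℂ) ⊆ UU := by
    rintro ⟨z, s⟩ ⟨hz, hs⟩
    rcases hs with rfl
    exact mem_UU_zero (hΩg z hz)
  obtain ⟨u, v, hu, hv, hΩu, h0v, huv⟩ :=
    generalized_tube_lemma hΩc isCompact_singleton isOpen_UU hsub
  obtain ⟨r, hr, hball⟩ := Metric.isOpen_iff.mp hv 0 (h0v rfl)
  refine ⟨r / 2, by positivity, fun z hz s hs => huv ⟨hΩu hz, hball ?_⟩⟩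
  rw [mem_ball, dist_zero_right]
  linarith

lemma continuousAt_FF_s {z s : ℂ} (h : (z, s) ∈ UU) : ContinuousAt (FF z) s := by
  have := (continuousAt_FF h).comp (x := s)
    ((continuous_const.prodMk continuous_id).continuousAt (x := s))
  exact this

lemma taylor_bound {z : ℂ} {r M : ℝ} (hr : 0 < r)
    (hU : ∀ s : ℂ, ‖s‖ ≤ r → (z, s) ∈ UU)
    (hM : ∀ s : ℂ, ‖s‖ ≤ r → ‖FF z s‖ ≤ M)
    {s : ℂ} (hs : ‖s‖ ≤ r / 2) :
    ‖FF z s - s * deriv (FF z) 0‖ ≤ 2 * M / r ^ 2 * ‖s‖ ^ 2 := by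
  have hM0 : 0 ≤ M := le_trans (by simp [FF_zero]) (hM 0 (by simp [hr.le]))
  set R : NNReal := r.toNNReal with hR
  have hRr : (R : ℝ) = r := Real.coe_toNNReal _ hr.le
  have hRpos : 0 < R := by simp [hR, hr]
  have hd : DifferentiableOn ℂ (FF z) (Metric.closedBall 0 (R : ℝ)) := by
    intro x hx
    rw [mem_closedBall, dist_zero_right, hRr] at hx
    exact (differentiableAt_FF_s (hU x hx)).differentiableWithinAt
  have hps := hd.hasFPowerSeriesOnBall hRpos
  set p := cauchyPowerSeries (FF z) 0 (R : ℝ) with hp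
  -- coefficient bounds
  have hcont : Continuous fun θ : ℝ => ‖FF z (circleMap 0 (R : ℝ) θ)‖ := by
    rw [continuous_iff_continuousAt]
    intro θ
    have hmem : (z, circleMap 0 (R : ℝ) θ) ∈ UU := by
      apply hU
      rw [norm_circleMap_zero, hRr, abs_of_pos hr]
    exact ((continuousAt_FF_s hmem).comp (continuous_circleMap 0 (R : ℝ)).continuousAt).norm
  have hint : ∫ θ in (0 : ℝ)..2 * Real.pi, ‖FF z (circleMap 0 (R : ℝ) θ)‖ ≤ 2 * Real.pi * M := by
    have := intervalIntegral.integral_mono_on (μ := MeasureTheory.volume) (a := (0 : ℝ)) (b := 2 * Real.pi)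
      (f := fun θ => ‖FF z (circleMap 0 (R : ℝ) θ)‖) (g := fun _ => M)
      (by positivity) (hcont.intervalIntegrable _ _) (intervalIntegrable_const)
      (fun θ _ => by
        apply hM
        have : ‖circleMap 0 (R : ℝ) θ‖ = |(R : ℝ)| := norm_circleMap_zero _ _
        rw [this, hRr, abs_of_pos hr])
    simpa [mul_comm] using this
  rw [hRr] at hint
  have hcoeff : ∀ n, ‖p.coeff n‖ ≤ M / r ^ n := by
    intro n
    have h1 : ‖p.coeff n‖ ≤ ‖p n‖ := by
      calc ‖p.coeff n‖ = ‖p n 1‖ := rfl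
        _ ≤ ‖p n‖ * ∏ i : Fin n, ‖(1 : Fin n → ℂ) i‖ := (p n).le_opNorm 1
        _ = ‖p n‖ := by simp
    have h2 : ‖p n‖ ≤ ((2 * Real.pi)⁻¹ *
        ∫ θ in (0 : ℝ)..2 * Real.pi, ‖FF z (circleMap 0 (R : ℝ) θ)‖) * |(R : ℝ)|⁻¹ ^ n :=
      norm_cauchyPowerSeries_le _ _ _ _
    have h3 : ((2 * Real.pi)⁻¹ *
        ∫ θ in (0 : ℝ)..2 * Real.pi, ‖FF z (circleMap 0 (R : ℝ) θ)‖) * |(R : ℝ)|⁻¹ ^ n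
        ≤ M / r ^ n := by
      rw [hRr, abs_of_pos hr, div_eq_mul_inv, ← inv_pow]
      have hpi : (0 : ℝ) < 2 * Real.pi := by positivity
      refine mul_le_mul_of_nonneg_right ?_ (by positivity)
      rw [inv_mul_le_iff₀ hpi]
      simpa [mul_comm] using hint
    exact le_trans h1 (le_trans h2 h3)
  -- the sum
  have hsmem : s ∈ Metric.eball (0 : ℂ) ((R : NNReal) : ENNReal) := by
    rw [Metric.emetric_ball_nnreal, mem_ball, dist_zero_right, hRr]
    linarith
  have hsum0 := hps.hasSum hsmem
  simp only [zero_add, FormalMultilinearSeries.apply_eq_pow_smul_coeff] at hsum0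
  have hsum : HasSum (fun n => s ^ n * p.coeff n) (FF z s) := by
    simpa [smul_eq_mul] using hsum0
  have hshift := (hasSum_nat_add_iff' 2).mpr hsum
  have hc0 : p.coeff 0 = 0 := by
    have h := hps.coeff_zero 1
    rw [FF_zero] at h
    exact h
  have hc1 : p.coeff 1 = deriv (FF z) 0 := (hps.hasFPowerSeriesAt.deriv).symm
  have hrange : ∑ i ∈ Finset.range 2, s ^ i * p.coeff i = s * deriv (FF z) 0 := by
    simp [Finset.sum_range_succ, hc0, hc1]
  rw [hrange] at hshift
  -- geometric bound
  set c : ℝ := ‖s‖ / r with hc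
  have hc0' : 0 ≤ c := by positivity
  have hc12 : c ≤ 1 / 2 := by
    rw [hc, div_le_div_iff₀ hr (by norm_num)]
    linarith
  have hc1' : c < 1 := lt_of_le_of_lt hc12 (by norm_num)
  have hgeo := (hasSum_geometric_of_lt_one hc0' hc1').mul_left (M * c ^ 2)
  have hb := hshift.norm_le_of_bounded hgeo ?_
  · calc ‖FF z s - s * deriv (FF z) 0‖ ≤ M * c ^ 2 * (1 - c)⁻¹ := hb
      _ ≤ M * c ^ 2 * 2 := by
          refine mul_le_mul_of_nonneg_left ?_ (by positivity)
          rw [← one_div, div_le_iff₀ (by linarith)]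
          linarith
      _ = 2 * M / r ^ 2 * ‖s‖ ^ 2 := by
          rw [hc]
          field_simp
  · intro n
    have : ‖s ^ (n + 2) * p.coeff (n + 2)‖ = ‖s‖ ^ (n + 2) * ‖p.coeff (n + 2)‖ := by
      rw [norm_mul, norm_pow]
    rw [this]
    calc ‖s‖ ^ (n + 2) * ‖p.coeff (n + 2)‖ ≤ ‖s‖ ^ (n + 2) * (M / r ^ (n + 2)) := by
          gcongr
          exact hcoeff _
      _ = M * c ^ 2 * c ^ n := by
          rw [hc]
          rw [div_pow, div_pow, pow_add]
          field_simp
          ring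

set_option maxHeartbeats 1000000 in
/-- Let `Ω` be a compact subset of the open upper half-plane such that for
every `z ∈ Ω`, `1 − z² ∉ (−∞, 0]` and `(1 + (1 − z²)^{1/2})/z ∉ (−∞, 0]`. Let `V₀ > 0`.
Then there are `C > 0` and `ν₀ > 0` such that for all real `ν ≥ ν₀` and all `z ∈ Ω`,
`|e^{−ν(ρ(z̃) − ρ(z))} − 1 + V₀ (1 − z²)^{1/2}/(2 ν z²) − V₀² (1 − z²)/(8 ν² z⁴)| ≤ C/ν³`. -/
theorem stmt9 (V₀ : ℝ) (hV₀ : 0 < V₀) (Ω : Set ℂ) (hΩc : IsCompact Ω)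
    (hΩup : ∀ z ∈ Ω, 0 < z.im)
    (h1 : ∀ z ∈ Ω, (1 - z ^ 2) ∈ Complex.slitPlane)
    (h2 : ∀ z ∈ Ω, (1 + (1 - z ^ 2) ^ ((1 : ℂ) / 2)) / z ∈ Complex.slitPlane) :
    ∃ C > 0, ∃ ν₀ > 0, ∀ ν : ℝ, ν₀ ≤ ν → ∀ z ∈ Ω,
      ‖(Complex.exp (-(ν : ℂ) * (olverRho (ztilde V₀ ν z) - olverRho z)) - 1
            + (V₀ : ℂ) * (1 - z ^ 2) ^ ((1 : ℂ) / 2) / (2 * (ν : ℂ) * z ^ 2)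
            - (V₀ : ℂ) ^ 2 * (1 - z ^ 2) / (8 * (ν : ℂ) ^ 2 * z ^ 4))‖
        ≤ C / ν ^ 3 := by
  have hΩg : ∀ z ∈ Ω, z ∈ olverGood := by
    intro z hz
    refine ⟨?_, h1 z hz, h2 z hz⟩
    intro h
    have him := hΩup z hz
    rw [h] at him
    simp at him
  obtain ⟨r, hr, hU⟩ := exists_tube Ω hΩc hΩg
  -- uniform bound for FF on the tube
  obtain ⟨M₀, hM₀⟩ : ∃ C, ∀ p ∈ Ω ×ˢ Metric.closedBall (0 : ℂ) r, ‖FF p.1 p.2‖ ≤ C := by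
    apply (hΩc.prod (isCompact_closedBall (0 : ℂ) r)).exists_bound_of_continuousOn
    intro p hp
    exact (continuousAt_FF (hU p.1 hp.1 p.2 (by
      simpa [mem_closedBall, dist_zero_right] using hp.2))).continuousWithinAt
  set M : ℝ := max M₀ 1 with hMdef
  have hM1 : (1 : ℝ) ≤ M := le_max_right _ _
  have hMpos : 0 < M := lt_of_lt_of_le one_pos hM1
  have hM : ∀ z ∈ Ω, ∀ s : ℂ, ‖s‖ ≤ r → ‖FF z s‖ ≤ M := fun z hz s hs =>
    le_trans (hM₀ (z, s) ⟨hz, by simpa [mem_closedBall, dist_zero_right] using hs⟩)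
      (le_max_left _ _)
  -- uniform bound for the derivative coefficient
  obtain ⟨B₀, hB₀⟩ : ∃ C, ∀ z ∈ Ω, ‖(1 - z ^ 2) ^ ((1 : ℂ) / 2) / (2 * z ^ 2)‖ ≤ C := by
    apply hΩc.exists_bound_of_continuousOn
    intro z hz
    have hz0 : z ≠ 0 := (hΩg z hz).1
    have hc : ContinuousAt (fun z : ℂ => (1 - z ^ 2) ^ ((1 : ℂ) / 2) / (2 * z ^ 2)) z := by
      refine ContinuousAt.div ?_ (by fun_prop) (by simp [hz0, pow_ne_zero])
      exact (ContinuousAt.sub continuousAt_const (by fun_prop)).cpow continuousAt_const (h1 z hz)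
    exact hc.continuousWithinAt
  set B : ℝ := max B₀ 1 with hBdef
  have hB1 : (1 : ℝ) ≤ B := le_max_right _ _
  have hBpos : 0 < B := lt_of_lt_of_le one_pos hB1
  have hB : ∀ z ∈ Ω, ‖(1 - z ^ 2) ^ ((1 : ℂ) / 2) / (2 * z ^ 2)‖ ≤ B := fun z hz =>
    le_trans (hB₀ z hz) (le_max_left _ _)
  -- constants
  set K1 : ℝ := V₀ * B with hK1def
  set K2 : ℝ := 2 * M * V₀ ^ 2 / r ^ 2 with hK2def
  have hK1pos : 0 < K1 := by positivity
  have hK2pos : 0 < K2 := by positivity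
  set C : ℝ := Real.exp K1 * (2 * K2) + K1 ^ 3 + 1 with hCdef
  set ν₀ : ℝ := max (max 1 (Real.sqrt (2 * V₀ / r))) (max K1 K2) with hν₀def
  refine ⟨C, by positivity, ν₀, lt_of_lt_of_le one_pos ((le_max_left _ _).trans (le_max_left _ _)), ?_⟩
  intro ν hν z hz
  have hν1 : (1 : ℝ) ≤ ν := le_trans ((le_max_left _ _).trans (le_max_left _ _)) hν
  have hνpos : (0 : ℝ) < ν := lt_of_lt_of_le one_pos hν1
  have hνK1 : K1 ≤ ν := le_trans ((le_max_left _ _).trans (le_max_right _ _)) hν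
  have hνK2 : K2 ≤ ν := le_trans ((le_max_right _ _).trans (le_max_right _ _)) hν
  have hνsqrt : Real.sqrt (2 * V₀ / r) ≤ ν := le_trans ((le_max_right _ _).trans (le_max_left _ _)) hν
  have hν2 : (1 : ℝ) ≤ ν ^ 2 := by nlinarith
  have hν3 : ν ≤ ν ^ 3 := by nlinarith
  have hzG := hΩg z hz
  have hz0 : z ≠ 0 := hzG.1
  have hνC : (ν : ℂ) ≠ 0 := by exact_mod_cast hνpos.ne'
  -- the small parameter
  set ε : ℝ := V₀ / ν ^ 2 with hεdef
  have hεpos : 0 < ε := by positivity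
  have hεr : ε ≤ r / 2 := by
    have h2 : 2 * V₀ / r ≤ ν ^ 2 := by
      have := Real.sq_sqrt (by positivity : (0:ℝ) ≤ 2 * V₀ / r)
      nlinarith [Real.sqrt_nonneg (2 * V₀ / r)]
    rw [hεdef, div_le_div_iff₀ (by positivity) (by norm_num)]
    rw [div_le_iff₀ hr] at h2
    nlinarith
  set s : ℂ := (ε : ℂ) with hsdef
  have hsnorm : ‖s‖ = ε := by
    rw [hsdef, Complex.norm_real, Real.norm_eq_abs, abs_of_pos hεpos]
  -- identify ztilde with ztF
  have hzt : ztilde V₀ ν z = ztF z s := by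
    rw [ztilde, ztF, hsdef, hεdef]
    push_cast
    rw [div_div]
  -- derivative value
  set q : ℂ := (1 - z ^ 2) ^ ((1 : ℂ) / 2) with hqdef
  have hq2 : q * q = 1 - z ^ 2 := sq_half_mul (h1 z hz)
  set d : ℂ := q / (2 * z ^ 2) with hddef
  have hder : deriv (FF z) 0 = d := (FF_hasDerivAt_zero hzG).deriv
  have hdB : ‖d‖ ≤ B := by
    exact hB z hz
  set c : ℂ := (V₀ : ℂ) * d with hcdef
  have hcK1 : ‖c‖ ≤ K1 := by
    rw [hcdef, norm_mul]
    simp only [Complex.norm_real, Real.norm_eq_abs, abs_of_pos hV₀]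
    exact mul_le_mul_of_nonneg_left hdB hV₀.le
  set x : ℂ := -c / (ν : ℂ) with hxdef
  have hxabs : ‖x‖ ≤ K1 / ν := by
    rw [hxdef, norm_div, norm_neg]
    simp only [Complex.norm_real, Real.norm_eq_abs, abs_of_pos hνpos]
    gcongr
  have hxK1 : ‖x‖ ≤ K1 := le_trans hxabs (by
    rw [div_le_iff₀ hνpos]; nlinarith)
  have hx1 : ‖x‖ ≤ 1 := le_trans hxabs (by
    rw [div_le_one hνpos]; exact hνK1)
  set u : ℂ := -(ν : ℂ) * FF z s with hudef
  -- Taylor remainder bound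
  have htb := taylor_bound hr (hU z hz) (hM z hz) (s := s) (by rw [hsnorm]; exact hεr)
  rw [hder] at htb
  have huv : u - x = -(ν : ℂ) * (FF z s - s * d) := by
    rw [hudef, hxdef, hcdef, hsdef, hεdef]
    push_cast
    field_simp
    ring
  have huvabs : ‖u - x‖ ≤ K2 / ν ^ 3 := by
    rw [huv, norm_mul, norm_neg]
    simp only [Complex.norm_real, Real.norm_eq_abs, abs_of_pos hνpos]
    calc ν * ‖FF z s - s * d‖ ≤ ν * (2 * M / r ^ 2 * ‖s‖ ^ 2) := by
          exact mul_le_mul_of_nonneg_left htb hνpos.le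
      _ = K2 / ν ^ 3 := by
          rw [hsnorm, hεdef, hK2def]
          field_simp
  have huv1 : ‖u - x‖ ≤ 1 := le_trans huvabs (by
    rw [div_le_one (by positivity)]
    exact le_trans hνK2 hν3)
  -- exponential bounds
  have hterm1 : ‖Complex.exp u - Complex.exp x‖ ≤ Real.exp K1 * (2 * (K2 / ν ^ 3)) := by
    have hfact : Complex.exp u - Complex.exp x = Complex.exp x * (Complex.exp (u - x) - 1) := by
      have hxu : x + (u - x) = u := by ring
      rw [mul_sub, mul_one, ← Complex.exp_add, hxu]
    rw [hfact, norm_mul]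
    have h1' : ‖Complex.exp x‖ ≤ Real.exp K1 := by
      rw [Complex.norm_exp]
      exact Real.exp_le_exp.2 (le_trans (Complex.re_le_norm x) hxK1)
    have h2' : ‖Complex.exp (u - x) - 1‖ ≤ 2 * (K2 / ν ^ 3) := by
      refine le_trans (Complex.norm_exp_sub_one_le huv1) ?_
      exact mul_le_mul_of_nonneg_left huvabs (by norm_num)
    exact mul_le_mul h1' h2' (norm_nonneg _) (Real.exp_pos _).le
  have hterm2 : ‖Complex.exp x - (1 + x + x ^ 2 / 2)‖ ≤ K1 ^ 3 / ν ^ 3 := by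
    have hb := Complex.exp_bound hx1 (by norm_num : 0 < 3)
    have hsum : ∑ m ∈ Finset.range 3, x ^ m / (m.factorial : ℂ) = 1 + x + x ^ 2 / 2 := by
      simp [Finset.sum_range_succ, Nat.factorial]
      try ring
    rw [hsum] at hb
    refine le_trans hb ?_
    have h3 : ‖x‖ ^ 3 ≤ (K1 / ν) ^ 3 :=
      pow_le_pow_left₀ (norm_nonneg _) hxabs 3
    have hconst : (((3 : ℕ).succ : ℝ) * (((3 : ℕ).factorial : ℝ) * 3)⁻¹) ≤ 1 := by
      norm_num [Nat.factorial]
    have h4 := mul_le_mul h3 hconst (by positivity) (by positivity)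
    refine le_trans h4 ?_
    rw [mul_one, div_pow]
  -- algebraic identification of the target
  have hexpr : Complex.exp (-(ν : ℂ) * (olverRho (ztilde V₀ ν z) - olverRho z)) - 1
      + (V₀ : ℂ) * (1 - z ^ 2) ^ ((1 : ℂ) / 2) / (2 * (ν : ℂ) * z ^ 2)
      - (V₀ : ℂ) ^ 2 * (1 - z ^ 2) / (8 * (ν : ℂ) ^ 2 * z ^ 4)
      = (Complex.exp u - Complex.exp x) + (Complex.exp x - (1 + x + x ^ 2 / 2)) := by
    have hFFeq : olverRho (ztilde V₀ ν z) - olverRho z = FF z s := by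
      rw [hzt, FF]
    rw [hFFeq]
    have hA : (V₀ : ℂ) * (1 - z ^ 2) ^ ((1 : ℂ) / 2) / (2 * (ν : ℂ) * z ^ 2) = -x := by
      rw [hxdef, hcdef, hddef, hqdef]
      field_simp
    have hB' : (V₀ : ℂ) ^ 2 * (1 - z ^ 2) / (8 * (ν : ℂ) ^ 2 * z ^ 4) = x ^ 2 / 2 := by
      rw [hxdef, hcdef, hddef]
      rw [← hq2]
      field_simp [hνC, hz0]
      ring
    rw [hA, hB', hudef]
    ring
  rw [hexpr]
  calc ‖(Complex.exp u - Complex.exp x) + (Complex.exp x - (1 + x + x ^ 2 / 2))‖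
      ≤ ‖Complex.exp u - Complex.exp x‖
        + ‖Complex.exp x - (1 + x + x ^ 2 / 2)‖ := norm_add_le _ _
    _ ≤ Real.exp K1 * (2 * (K2 / ν ^ 3)) + K1 ^ 3 / ν ^ 3 := add_le_add hterm1 hterm2
    _ ≤ C / ν ^ 3 := by
        have h1' : Real.exp K1 * (2 * (K2 / ν ^ 3)) = Real.exp K1 * (2 * K2) / ν ^ 3 := by
          ring
        rw [hCdef, h1', ← add_div,
          div_le_div_iff₀ (by positivity) (by positivity)]
        have hν3pos : (0 : ℝ) < ν ^ 3 := by positivity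
        nlinarith [hK1pos, hν3pos]
end
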